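/- arXiv:2111.10883 — 6 statements merged into one kernel-verified Lean document; each statement's English description precedes it below -/
import Mathlib

section
/- If φ : 𝔻 → 𝔻 is analytic with φ(0) = 0 and power series φ(z) = Σ_{n≥1} c_n z^n, then for every r with 0 ≤ r ≤ 1/3 and every z with |z| = r, the majorant series satisfies Σ_{n=1}^∞ |c_n| r^n ≤ r. -/
open Metric

noncomputable def majorant (a : ℕ → ℂ) (r : ℝ) : ENNReal :=
  ∑' n, (‖a n‖₊ : ENNReal) * (ENNReal.ofReal r) ^ n

open Complex

lemma hasFPow (b : ℕ → ℂ) (f : ℂ → ℂ)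
    (h : ∀ z ∈ ball (0:ℂ) 1, HasSum (fun n => b n * z ^ n) (f z)) :
    HasFPowerSeriesOnBall f (FormalMultilinearSeries.ofScalars ℂ b) 0 1 := by
  constructor
  · -- 1 ≤ radius
    refine ENNReal.le_of_forall_nnreal_lt fun r hr => ?_
    have hr1 : (r : ℝ) < 1 := by exact_mod_cast hr
    have hz : (r : ℂ) ∈ ball (0:ℂ) 1 := by
      simp [_root_.abs_of_nonneg r.coe_nonneg, hr1, mem_ball_zero_iff]
    have hs := (h _ hz).summable
    refine FormalMultilinearSeries.le_radius_of_tendsto _ (l := 0) ?_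
    have := hs.tendsto_atTop_zero
    have h2 : Filter.Tendsto (fun n => ‖b n * (r:ℂ)^n‖) Filter.atTop (nhds 0) := by
      simpa using this.norm
    refine h2.congr fun n => ?_
    rw [FormalMultilinearSeries.ofScalars_norm]
    rw [norm_mul, norm_pow]
    norm_num
  · exact one_pos
  · intro y hy
    have hy' : y ∈ ball (0:ℂ) 1 := by
      rw [EMetric.mem_ball, edist_zero_right] at hy
      rw [mem_ball_zero_iff]
      rw [← ofReal_norm, ENNReal.ofReal_lt_one] at hy
      exact hy
    have := h y hy'
    simp only [zero_add]
    convert this using 2 with n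
    · rfl
    rw [FormalMultilinearSeries.ofScalars_apply_eq]
    simp [smul_eq_mul]

lemma mobius_maps (a : ℂ) (ha : ‖a‖ < 1) {w : ℂ} (hw : ‖w‖ < 1) :
    ‖(w - a) / (1 - (starRingEnd ℂ) a * w)‖ < 1 := by
  have hden : ‖(starRingEnd ℂ) a * w‖ < 1 := by
    rw [norm_mul, RCLike.norm_conj]
    nlinarith [norm_nonneg a, norm_nonneg w]
  have hne : (1 : ℂ) - (starRingEnd ℂ) a * w ≠ 0 := by
    intro h
    have : (1:ℂ) = (starRingEnd ℂ) a * w := by linear_combination h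
    rw [← this] at hden; simp at hden
  rw [norm_div, div_lt_one (norm_pos_iff.mpr hne)]
  have key : ‖(1:ℂ) - (starRingEnd ℂ) a * w‖ ^ 2 - ‖w - a‖ ^ 2
      = (1 - ‖a‖ ^ 2) * (1 - ‖w‖ ^ 2) := by
    have e1 : ‖(1:ℂ) - (starRingEnd ℂ) a * w‖ ^ 2 = normSq (1 - (starRingEnd ℂ) a * w) := by
      rw [normSq_eq_norm_sq]
    have e2 : ‖w - a‖ ^ 2 = normSq (w - a) := by rw [normSq_eq_norm_sq]
    have e3 : ‖a‖ ^ 2 = normSq a := by rw [normSq_eq_norm_sq]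
    have e4 : ‖w‖ ^ 2 = normSq w := by rw [normSq_eq_norm_sq]
    rw [e1, e2, e3, e4]
    simp only [normSq_sub, normSq_mul, normSq_conj, normSq_one]
    simp [normSq_apply, mul_conj]
    ring_nf
  nlinarith [norm_nonneg (w - a), norm_nonneg ((1:ℂ) - (starRingEnd ℂ) a * w),
    mul_pos (by nlinarith [norm_nonneg a] : (0:ℝ) < 1 - ‖a‖ ^ 2)
      (by nlinarith [norm_nonneg w] : (0:ℝ) < 1 - ‖w‖ ^ 2)]

lemma schwarz_pick (f : ℂ → ℂ) (hd : DifferentiableOn ℂ f (ball (0:ℂ) 1))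
    (hm : Set.MapsTo f (ball (0:ℂ) 1) (ball (0:ℂ) 1)) :
    ‖deriv f 0‖ ≤ 1 - ‖f 0‖ ^ 2 := by
  set a : ℂ := f 0 with ha_def
  have h0 : (0:ℂ) ∈ ball (0:ℂ) 1 := mem_ball_self one_pos
  have ha : ‖a‖ < 1 := by simpa [mem_ball_zero_iff] using hm h0
  set m : ℂ → ℂ := fun w => (w - a) / (1 - (starRingEnd ℂ) a * w) with hm_def
  have hne : ∀ w : ℂ, ‖w‖ < 1 → (1 : ℂ) - (starRingEnd ℂ) a * w ≠ 0 := by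
    intro w hw h
    have h1 : ‖(starRingEnd ℂ) a * w‖ < 1 := by
      rw [norm_mul, RCLike.norm_conj]; nlinarith [norm_nonneg a, norm_nonneg w]
    have : (1:ℂ) = (starRingEnd ℂ) a * w := by linear_combination h
    rw [← this] at h1; simp at h1
  have hnea : (1:ℂ) - (starRingEnd ℂ) a * a ≠ 0 := hne a ha
  -- m is differentiable at a with derivative 1 / (1 - conj a * a)
  have hma : HasDerivAt m (1 / (1 - (starRingEnd ℂ) a * a)) a := by
    have h1 : HasDerivAt (fun w : ℂ => w - a) 1 a := (hasDerivAt_id a).sub_const a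
    have h2 : HasDerivAt (fun w : ℂ => (1:ℂ) - (starRingEnd ℂ) a * w)
        (-(starRingEnd ℂ) a) a := by
      simpa using ((hasDerivAt_id a).const_mul ((starRingEnd ℂ) a)).const_sub 1
    have := h1.div h2 hnea
    refine (this.congr_deriv ?_ : HasDerivAt m _ a)
    field_simp
    ring
  -- the composition
  have hdf0 : DifferentiableAt ℂ f 0 := hd.differentiableAt (isOpen_ball.mem_nhds h0)
  have hcomp : deriv (m ∘ f) 0 = (1 / (1 - (starRingEnd ℂ) a * a)) * deriv f 0 := by
    rw [deriv_comp 0 hma.differentiableAt hdf0, hma.deriv]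
  have hdcomp : DifferentiableOn ℂ (m ∘ f) (ball (0:ℂ) 1) := by
    apply DifferentiableOn.comp (t := ball (0:ℂ) 1) _ hd hm
    intro w hw
    rw [mem_ball_zero_iff] at hw
    exact ((differentiableAt_id.sub_const a).div
      ((differentiableAt_const 1).sub ((differentiableAt_const _).mul differentiableAt_id))
      (hne w hw)).differentiableWithinAt
  have hmaps : Set.MapsTo (m ∘ f) (ball (0:ℂ) 1) (ball ((m ∘ f) 0) 1) := by
    intro w hw
    have : (m ∘ f) 0 = 0 := by simp [m, ha_def]
    rw [this, mem_ball_zero_iff]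
    exact mobius_maps a ha (mem_ball_zero_iff.mp (hm hw))
  have hder := Complex.norm_deriv_le_div_of_mapsTo_ball hdcomp (hmaps.mono_right ball_subset_closedBall) one_pos
  rw [hcomp] at hder
  have hval : (1:ℂ) - (starRingEnd ℂ) a * a = ((1 - ‖a‖ ^ 2 : ℝ) : ℂ) := by
    have : (starRingEnd ℂ) a * a = ((normSq a : ℝ) : ℂ) := by
      rw [mul_comm, mul_conj]
    rw [this]
    rw [normSq_eq_norm_sq]
    push_cast
    norm_num
  rw [hval] at hder
  have hpos : (0:ℝ) < 1 - ‖a‖ ^ 2 := by nlinarith [norm_nonneg a]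
  rw [norm_mul, norm_div, norm_one, Complex.norm_real, Real.norm_eq_abs, abs_of_pos hpos] at hder
  rw [div_self one_ne_zero, one_div, inv_mul_eq_div] at hder
  exact (div_le_one hpos).mp hder

lemma coeff_bound (b : ℕ → ℂ) (g : ℂ → ℂ)
    (hg : ∀ z ∈ ball (0:ℂ) 1, HasSum (fun n => b n * z ^ n) (g z))
    (hb : ∀ z ∈ ball (0:ℂ) 1, ‖g z‖ ≤ 1) (n : ℕ) (hn : 1 ≤ n) :
    ‖b n‖ ≤ 1 - ‖b 0‖ ^ 2 := by
  have hn0 : (n : ℕ) ≠ 0 := by omega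
  set ζ : ℂ := Complex.exp (2 * Real.pi * I / n) with hζ
  have hprim : IsPrimitiveRoot ζ n := Complex.isPrimitiveRoot_exp n hn0
  have hζn : ζ ^ n = 1 := hprim.pow_eq_one
  have hζ1 : ‖ζ‖ = 1 := Complex.norm_eq_one_of_pow_eq_one hζn hn0
  -- root of unity filter
  have hfilter : ∀ m : ℕ, (∑ k ∈ Finset.range n, ζ ^ (k * m)) / n
      = if n ∣ m then 1 else 0 := by
    intro m
    have : ∀ k, ζ ^ (k * m) = (ζ ^ m) ^ k := fun k => by rw [← pow_mul, mul_comm]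
    simp_rw [this]
    by_cases hd : n ∣ m
    · have : ζ ^ m = 1 := (hprim.pow_eq_one_iff_dvd m).mpr hd
      have hnC : (n:ℂ) ≠ 0 := Nat.cast_ne_zero.mpr hn0
      simp [this, hd, hnC]
    · have hne1 : ζ ^ m ≠ 1 := fun h => hd ((hprim.pow_eq_one_iff_dvd m).mp h)
      rw [geom_sum_eq hne1]
      have : (ζ ^ m) ^ n = 1 := by rw [← pow_mul, mul_comm, pow_mul, hζn, one_pow]
      rw [this]
      simp [hd]
  -- the averaged function h
  set h : ℂ → ℂ := fun w => ∑' j, b (n * j) * w ^ j with hh_def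
  have key : ∀ w ∈ ball (0:ℂ) 1, HasSum (fun j => b (n * j) * w ^ j) (h w) ∧ ‖h w‖ ≤ 1 := by
    intro w hw
    rw [mem_ball_zero_iff] at hw
    -- choose an n-th root u of w
    obtain ⟨u, hu⟩ : ∃ u : ℂ, u ^ n = w := IsAlgClosed.exists_pow_nat_eq w (by omega)
    have hu1 : ‖u‖ < 1 := by
      by_contra hge
      push_neg at hge
      have h1 : (1:ℝ) ≤ ‖u‖ ^ n := one_le_pow₀ hge
      rw [← hu, norm_pow] at hw
      linarith
    have hmem : ∀ k : ℕ, ζ ^ k * u ∈ ball (0:ℂ) 1 := by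
      intro k
      rw [mem_ball_zero_iff, norm_mul, norm_pow, hζ1, one_pow, one_mul]
      exact hu1
    -- sum over rotations
    have hsum1 : HasSum (fun m => ∑ k ∈ Finset.range n, b m * (ζ ^ k * u) ^ m)
        (∑ k ∈ Finset.range n, g (ζ ^ k * u)) :=
      hasSum_sum fun k _ => hg _ (hmem k)
    have hsum2 := hsum1.div_const (n : ℂ)
    have hterm : ∀ m, (∑ k ∈ Finset.range n, b m * (ζ ^ k * u) ^ m) / n
        = if n ∣ m then b m * u ^ m else 0 := by
      intro m
      have : ∀ k, b m * (ζ ^ k * u) ^ m = ζ ^ (k * m) * (b m * u ^ m) := by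
        intro k; rw [mul_pow, ← pow_mul]; ring
      simp_rw [this, ← Finset.sum_mul]
      rw [div_eq_mul_inv, mul_right_comm, ← div_eq_mul_inv, hfilter m]
      by_cases hd : n ∣ m <;> simp [hd]
    rw [show (fun m => (∑ k ∈ Finset.range n, b m * (ζ ^ k * u) ^ m) / (n:ℂ))
        = fun m => if n ∣ m then b m * u ^ m else 0 from funext hterm] at hsum2
    -- restrict to multiples of n
    have hinj : Function.Injective (fun j : ℕ => n * j) := fun x y hxy => by
      simpa [hn0] using hxy
    have hsupp : ∀ m ∉ Set.range (fun j : ℕ => n * j),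
        (if n ∣ m then b m * u ^ m else 0) = 0 := by
      intro m hm
      have hd : ¬ n ∣ m := by
        rintro ⟨j, rfl⟩; exact hm ⟨j, rfl⟩
      simp [hd]
    have hsum3 : HasSum (fun j => b (n * j) * w ^ j)
        ((∑ k ∈ Finset.range n, g (ζ ^ k * u)) / n) := by
      have := (hinj.hasSum_iff hsupp).mpr hsum2
      refine this.congr_fun fun j => ?_
      simp [Nat.dvd_mul_right, pow_mul, hu]
    refine ⟨hsum3.summable.hasSum, ?_⟩
    rw [hh_def]
    simp only
    rw [hsum3.tsum_eq]
    rw [norm_div]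
    have hnorm : ‖∑ k ∈ Finset.range n, g (ζ ^ k * u)‖ ≤ n := by
      calc ‖∑ k ∈ Finset.range n, g (ζ ^ k * u)‖
          ≤ ∑ k ∈ Finset.range n, ‖g (ζ ^ k * u)‖ := norm_sum_le _ _
        _ ≤ ∑ k ∈ Finset.range n, 1 := Finset.sum_le_sum fun k _ => hb _ (hmem k)
        _ = n := by simp
    have hnc : ‖(n:ℂ)‖ = (n:ℝ) := by simp
    rw [hnc, div_le_one (by exact_mod_cast Nat.pos_of_ne_zero hn0)]
    exact hnorm
  -- h 0 = b 0
  have h0mem : (0:ℂ) ∈ ball (0:ℂ) 1 := mem_ball_self one_pos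
  have hh0 : h 0 = b 0 := by
    have h1 := (key 0 h0mem).1
    have h2 : HasSum (fun j => b (n * j) * (0:ℂ) ^ j) (b (n * 0) * (0:ℂ) ^ 0) := by
      apply hasSum_single (f := fun j => b (n * j) * (0:ℂ) ^ j) 0
      intro j hj
      simp [zero_pow hj]
    have := h1.unique h2
    simpa using this
  have hb0 : ‖b 0‖ ≤ 1 := by
    have h1 := hg 0 h0mem
    have h2 : HasSum (fun m => b m * (0:ℂ) ^ m) (b 0) := by
      have := hasSum_single (f := fun m => b m * (0:ℂ) ^ m) 0 (fun j hj => by simp [zero_pow hj])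
      simpa using this
    have hg0 : g 0 = b 0 := h1.unique h2
    rw [← hg0]; exact hb 0 h0mem
  -- scaling argument
  have hscale : ∀ t : ℝ, 0 < t → t < 1 → t * ‖b n‖ ≤ 1 - t^2 * ‖b 0‖^2 := by
    intro t ht0 ht1
    set ft : ℂ → ℂ := fun w => (t:ℂ) * h w with hft_def
    have hftsum : ∀ z ∈ ball (0:ℂ) 1,
        HasSum (fun j => ((t:ℂ) * b (n * j)) * z ^ j) (ft z) := by
      intro z hz
      have := ((key z hz).1).mul_left (t:ℂ)
      refine this.congr_fun fun j => by ring
    have hfp := hasFPow (fun j => (t:ℂ) * b (n * j)) ft hftsum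
    have hsub : ball (0:ℂ) 1 ⊆ Metric.eball (0:ℂ) 1 := by
      intro y hy
      rw [EMetric.mem_ball, edist_zero_right]
      rw [← ofReal_norm, ENNReal.ofReal_lt_one]; exact mem_ball_zero_iff.mp hy
    have hdiff : DifferentiableOn ℂ ft (ball (0:ℂ) 1) :=
      fun x hx => (hfp.differentiableOn x (hsub hx)).mono hsub
    have hmaps : Set.MapsTo ft (ball (0:ℂ) 1) (ball (0:ℂ) 1) := by
      intro w hw
      rw [mem_ball_zero_iff]
      rw [hft_def]
      simp only [norm_mul, Complex.norm_real, Real.norm_eq_abs, abs_of_pos ht0]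
      calc t * ‖h w‖ ≤ t * 1 := by
            exact mul_le_mul_of_nonneg_left (key w hw).2 ht0.le
        _ < 1 := by linarith
    have hderiv : deriv ft 0 = (t:ℂ) * b n := by
      have := hfp.hasFPowerSeriesAt.deriv
      rw [this]
      show (FormalMultilinearSeries.ofScalars ℂ fun j => (t:ℂ) * b (n * j)) 1 (fun _ => 1)
        = (t:ℂ) * b n
      rw [FormalMultilinearSeries.ofScalars_apply_eq]
      simp
    have hsp := schwarz_pick ft hdiff hmaps
    have hf0 : ft 0 = (t:ℂ) * b 0 := by rw [hft_def]; simp [hh0]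
    rw [hderiv, hf0] at hsp
    simp only [norm_mul, Complex.norm_real, Real.norm_eq_abs, abs_of_pos ht0, mul_pow] at hsp
    nlinarith [norm_nonneg (b 0), norm_nonneg (b n)]
  -- epsilon argument
  refine le_of_forall_pos_le_add fun ε hε => ?_
  set t : ℝ := max (1/2) (1 - ε/4) with ht_def
  have ht0 : 0 < t := lt_of_lt_of_le one_half_pos (le_max_left _ _)
  have ht1 : t < 1 := by
    apply max_lt (by norm_num)
    linarith
  have htm : 1 - ε/4 ≤ t := le_max_right _ _
  have hth : 1/2 ≤ t := le_max_left _ _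
  have h1 := hscale t ht0 ht1
  have ha1 : ‖b 0‖ ^ 2 ≤ 1 := by nlinarith [norm_nonneg (b 0)]
  have e1 : ‖b 0‖^2 * (t * (1 - t)) ≤ 1 * (1 * (ε/4)) := by
    apply mul_le_mul ha1 _ (by nlinarith) (by norm_num)
    apply mul_le_mul ht1.le (by linarith) (by linarith) (by norm_num)
  have e2 : (1/2) * ε ≤ t * ε := mul_le_mul_of_nonneg_right hth hε.le
  have key2 : t * ‖b n‖ ≤ t * (1 - ‖b 0‖^2 + ε) := by nlinarith [e1, h1, e2, htm]
  exact (mul_le_mul_iff_right₀ ht0).mp key2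

theorem bohr_operator_schwarz (φ : ℂ → ℂ) (c : ℕ → ℂ)
    (hmap : ∀ z ∈ ball (0:ℂ) 1, φ z ∈ ball (0:ℂ) 1)
    (hφ0 : φ 0 = 0)
    (hsum : ∀ z ∈ ball (0:ℂ) 1, HasSum (fun n => c n * z ^ n) (φ z)) :
    ∀ r : ℝ, 0 ≤ r → r ≤ 1/3 → majorant c r ≤ ENNReal.ofReal r := by
  have h0mem : (0:ℂ) ∈ ball (0:ℂ) 1 := mem_ball_self one_pos
  -- c 0 = 0
  have hc0 : c 0 = 0 := by
    have h1 := hsum 0 h0mem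
    have h2 : HasSum (fun n => c n * (0:ℂ) ^ n) (c 0) := by
      have := hasSum_single (f := fun n => c n * (0:ℂ) ^ n) 0
        (fun j hj => by simp [zero_pow hj])
      simpa using this
    rw [hφ0] at h1
    exact h2.unique h1
  -- φ is analytic on the ball
  have hfp := hasFPow c φ hsum
  have hsub : ball (0:ℂ) 1 ⊆ Metric.eball (0:ℂ) 1 := by
    intro y hy
    rw [EMetric.mem_ball, edist_zero_right]
    rw [← ofReal_norm, ENNReal.ofReal_lt_one]; exact mem_ball_zero_iff.mp hy
  have hdφ : DifferentiableOn ℂ φ (ball (0:ℂ) 1) :=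
    fun x hx => (hfp.differentiableOn x (hsub hx)).mono hsub
  have hmaps : Set.MapsTo φ (ball (0:ℂ) 1) (ball (0:ℂ) 1) := fun z hz => hmap z hz
  -- c 1 = deriv φ 0  and ‖c 1‖ ≤ 1
  have hc1 : deriv φ 0 = c 1 := by
    have := hfp.hasFPowerSeriesAt.deriv
    rw [this]
    show (FormalMultilinearSeries.ofScalars ℂ c) 1 (fun _ => 1) = c 1
    rw [FormalMultilinearSeries.ofScalars_apply_eq]
    simp
  have hc1le : ‖c 1‖ ≤ 1 := by
    rw [← hc1]
    exact Complex.norm_deriv_le_one_of_mapsTo_ball hdφ (by rw [hφ0]; exact hmaps.mono_right ball_subset_closedBall) one_pos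
  -- the quotient function g
  set b : ℕ → ℂ := fun m => c (m + 1) with hb_def
  set g : ℂ → ℂ := fun z => if z = 0 then c 1 else z⁻¹ * φ z with hg_def
  have hgsum : ∀ z ∈ ball (0:ℂ) 1, HasSum (fun m => b m * z ^ m) (g z) := by
    intro z hz
    rcases eq_or_ne z 0 with rfl | hz0
    · have h2 : HasSum (fun m => b m * (0:ℂ) ^ m) (b 0) := by
        have := hasSum_single (f := fun m => b m * (0:ℂ) ^ m) 0
          (fun j hj => by simp [zero_pow hj])
        simpa using this
      simpa [hg_def] using h2
    · have h1 := hsum z hz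
      rw [← hasSum_nat_add_iff' 1] at h1
      simp only [Finset.range_one, Finset.sum_singleton, hc0, zero_mul, sub_zero,
        pow_zero] at h1
      have h2 : HasSum (fun m => z * (b m * z ^ m)) (φ z) := by
        refine h1.congr_fun fun m => ?_
        rw [pow_succ]
        ring
      have h3 := h2.mul_left z⁻¹
      have h4 : HasSum (fun m => b m * z ^ m) (z⁻¹ * φ z) := by
        convert h3 using 2 with m
        · rfl
        field_simp
      simpa [hg_def, hz0] using h4
  have hgle : ∀ z ∈ ball (0:ℂ) 1, ‖g z‖ ≤ 1 := by
    intro z hz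
    rcases eq_or_ne z 0 with rfl | hz0
    · simpa [hg_def] using hc1le
    · have hφz : ‖φ z‖ ≤ ‖z‖ :=
        Complex.norm_le_norm_of_mapsTo_ball hdφ (hmaps.mono_right ball_subset_closedBall) hφ0 (mem_ball_zero_iff.mp hz)
      have hz0' : (0:ℝ) < ‖z‖ := norm_pos_iff.mpr hz0
      simp only [hg_def, if_neg hz0, norm_mul, norm_inv]
      rw [inv_mul_le_iff₀ hz0']
      simpa using hφz
  -- coefficient bounds
  have hb0 : ‖b 0‖ ≤ 1 := by simpa [hb_def] using hc1le
  have hbm : ∀ m : ℕ, 1 ≤ m → ‖b m‖ ≤ 1 - ‖b 0‖ ^ 2 :=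
    fun m hm => coeff_bound b g hgsum hgle m hm
  -- Now the summation
  intro r hr0 hr3
  have hr1 : r < 1 := by linarith
  set a : ℝ := ‖b 0‖ with ha_def
  have ha0 : 0 ≤ a := norm_nonneg _
  have hble : ∀ m : ℕ, ‖b m‖ * r ^ m ≤ 1 * r ^ m := by
    intro m
    apply mul_le_mul_of_nonneg_right _ (by positivity)
    rcases Nat.eq_zero_or_pos m with rfl | hm
    · exact hb0
    · exact (hbm m hm).trans (by nlinarith)
  have hgeo : Summable (fun m : ℕ => r ^ m) := summable_geometric_of_lt_one hr0 hr1
  have hS : Summable (fun m : ℕ => ‖b m‖ * r ^ m) := by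
    apply Summable.of_nonneg_of_le (fun m => by positivity) hble
    simpa using hgeo
  set S : ℝ := ∑' m, ‖b m‖ * r ^ m with hS_def
  have hSle : S ≤ 1 := by
    have hsplit : S = ‖b 0‖ * r ^ 0 + ∑' m, ‖b (m+1)‖ * r ^ (m+1) := by
      rw [hS_def]
      exact hS.tsum_eq_zero_add
    have htail : (∑' m, ‖b (m+1)‖ * r ^ (m+1)) ≤ (1 - a^2) * (r / (1 - r)) := by
      have hcomp : ∀ m : ℕ, ‖b (m+1)‖ * r ^ (m+1) ≤ (1 - a^2) * r * r ^ m := by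
        intro m
        rw [pow_succ]
        calc ‖b (m+1)‖ * (r ^ m * r) ≤ (1 - a^2) * (r ^ m * r) := by
              apply mul_le_mul_of_nonneg_right (hbm (m+1) (by omega)) (by positivity)
          _ = (1 - a^2) * r * r ^ m := by ring
      calc (∑' m, ‖b (m+1)‖ * r ^ (m+1)) ≤ ∑' m, (1 - a^2) * r * r ^ m := by
            apply Summable.tsum_le_tsum hcomp (hS.comp_injective Nat.succ_injective) (hgeo.mul_left _)
        _ = (1 - a^2) * r * (1 - r)⁻¹ := by
            rw [tsum_mul_left, tsum_geometric_of_lt_one hr0 hr1]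
        _ = (1 - a^2) * (r / (1 - r)) := by ring
    have hrr : r / (1 - r) ≤ 1 / 2 := by
      rw [div_le_div_iff₀ (by linarith) (by norm_num)]
      linarith
    have h2 : (1 - a^2) * (r / (1 - r)) ≤ (1 - a^2) * (1/2) := by
      apply mul_le_mul_of_nonneg_left hrr (by nlinarith)
    have hfin : a + (1 - a^2) * (1/2) ≤ 1 := by nlinarith [sq_nonneg (1 - a)]
    rw [hsplit]
    simp only [pow_zero, mul_one]
    calc a + ∑' m, ‖b (m+1)‖ * r ^ (m+1) ≤ a + (1 - a^2) * (r / (1-r)) := by linarith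
      _ ≤ a + (1 - a^2) * (1/2) := by linarith
      _ ≤ 1 := hfin
  -- Transfer to ENNReal
  set R : ENNReal := ENNReal.ofReal r with hR_def
  have hT : (∑' m, (‖b m‖₊ : ENNReal) * R ^ m) ≤ 1 := by
    have heq : (∑' m, (‖b m‖₊ : ENNReal) * R ^ m) = ENNReal.ofReal S := by
      rw [hS_def, ENNReal.ofReal_tsum_of_nonneg (fun m => by positivity) hS]
      congr 1
      funext m
      rw [ENNReal.ofReal_mul (norm_nonneg _), ENNReal.ofReal_pow hr0,
        ofReal_norm, enorm_eq_nnnorm]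
    rw [heq, ← ENNReal.ofReal_one]
    exact ENNReal.ofReal_le_ofReal hSle
  have hmaj : majorant c r = R * ∑' m, (‖b m‖₊ : ENNReal) * R ^ m := by
    rw [majorant]
    have hshift : (∑' n, (‖c n‖₊ : ENNReal) * R ^ n)
        = ∑' m, (‖c (m+1)‖₊ : ENNReal) * R ^ (m+1) := by
      refine (Function.Injective.tsum_eq Nat.succ_injective ?_).symm
      intro n hn
      rcases n with _ | m
      · simp [hc0] at hn
      · exact ⟨m, rfl⟩
    rw [hshift]
    rw [← ENNReal.tsum_mul_left]
    congr 1
    funext m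
    rw [pow_succ]
    ring
  rw [hmaj]
  calc R * ∑' m, (‖b m‖₊ : ENNReal) * R ^ m ≤ R * 1 := mul_le_mul_right hT R
    _ = R := mul_one R
end

section
/- Let f, g : 𝔻 → ℂ be analytic with power series f(z) = Σ a_n z^n and g(z) = Σ b_n z^n. If f is subordinate to g (i.e., f = g ∘ φ for some analytic φ : 𝔻 → 𝔻 with φ(0) = 0), then Σ_{n=0}^∞ |a_n| r^n ≤ Σ_{n=0}^∞ |b_n| r^n for all 0 ≤ r ≤ 1/3. -/
open Metric

namespace BohrSub

open Complex Finset Filter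

/-- `c` is a sequence of Taylor coefficients of `F` on the ball of radius `δ`. -/
def Exp (c : ℕ → ℂ) (F : ℂ → ℂ) (δ : ℝ) : Prop :=
  ∀ z ∈ ball (0:ℂ) δ, HasSum (fun n => c n * z ^ n) (F z)

lemma Exp.bound {c : ℕ → ℂ} {F : ℂ → ℂ} {δ : ℝ} (h : Exp c F δ) {q : ℝ}
    (hq0 : 0 < q) (hq : q < δ) :
    ∃ B : ℝ, 0 ≤ B ∧ ∀ n, ‖c n‖ * q ^ n ≤ B := by
  have hz : ((q : ℂ)) ∈ ball (0:ℂ) δ := by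
    rw [mem_ball_zero_iff, Complex.norm_real, Real.norm_eq_abs, abs_of_pos hq0]
    exact hq
  have hs : Summable fun n => c n * (q:ℂ) ^ n := (h _ hz).summable
  have ht : Tendsto (fun n => ‖c n * (q:ℂ) ^ n‖) atTop (nhds 0) := by
    simpa using hs.tendsto_atTop_zero.norm
  obtain ⟨B, hB⟩ := ht.bddAbove_range
  have hmem : ∀ n, ‖c n‖ * q ^ n ≤ B := by
    intro n
    have h1 : ‖c n * (q:ℂ) ^ n‖ ≤ B := hB (Set.mem_range_self n)
    rwa [norm_mul, norm_pow, Complex.norm_real, Real.norm_eq_abs, abs_of_pos hq0] at h1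
  exact ⟨B, le_trans (by positivity) (hmem 0), hmem⟩

lemma Exp.summable_norm {c : ℕ → ℂ} {F : ℂ → ℂ} {δ : ℝ} (h : Exp c F δ) (σ : ℕ)
    {t : ℝ} (ht0 : 0 ≤ t) (ht : t < δ) :
    Summable fun n => ‖c (n + σ)‖ * t ^ n := by
  have hδ0 : 0 < δ := lt_of_le_of_lt ht0 ht
  obtain ⟨q, hq0, hqδ, htq⟩ : ∃ q : ℝ, 0 < q ∧ q < δ ∧ t < q :=
    ⟨(t + δ) / 2, by linarith, by linarith, by linarith⟩
  obtain ⟨B, hB0, hB⟩ := h.bound hq0 hqδ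
  apply Summable.of_nonneg_of_le (fun n => by positivity) (fun n => ?_)
    ((summable_geometric_of_lt_one (by positivity)
      ((div_lt_one hq0).mpr htq)).mul_left (B / q ^ σ))
  · have h1 : ‖c (n + σ)‖ ≤ B / q ^ (n + σ) :=
      (le_div_iff₀ (by positivity)).mpr (hB (n + σ))
    calc ‖c (n + σ)‖ * t ^ n ≤ (B / q ^ (n + σ)) * t ^ n := by
          exact mul_le_mul_of_nonneg_right h1 (pow_nonneg ht0 n)
      _ = (B / q ^ σ) * (t / q) ^ n := by
          rw [div_pow, pow_add]
          ring

lemma Exp.summable_norm_mul {c : ℕ → ℂ} {F : ℂ → ℂ} {δ : ℝ} (h : Exp c F δ)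
    {z : ℂ} (hz : ‖z‖ < δ) : Summable fun n => ‖c n * z ^ n‖ := by
  have h0 := h.summable_norm 0 (norm_nonneg z) hz
  exact h0.congr fun n => by simp [norm_mul, norm_pow]

noncomputable def ofc (c : ℕ → ℂ) : FormalMultilinearSeries ℂ ℂ ℂ :=
  FormalMultilinearSeries.ofScalars ℂ c

lemma ofc_apply (c : ℕ → ℂ) (n : ℕ) (z : ℂ) : (ofc c) n (fun _ => z) = c n * z ^ n := by
  rw [ofc, FormalMultilinearSeries.ofScalars_apply_eq, smul_eq_mul]

lemma ofc_coeff (c : ℕ → ℂ) (n : ℕ) : (ofc c).coeff n = c n := by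
  have h := ofc_apply c n 1
  rw [one_pow, mul_one] at h
  exact h

lemma Exp.hasFPS {c : ℕ → ℂ} {F : ℂ → ℂ} {δ : ℝ} (h : Exp c F δ) (hδ : 0 < δ) :
    HasFPowerSeriesOnBall F (ofc c) 0 (ENNReal.ofReal δ) := by
  refine ⟨?_, ENNReal.ofReal_pos.mpr hδ, ?_⟩
  · refine ENNReal.le_of_forall_nnreal_lt fun t htlt => ?_
    have ht : (t : ℝ) < δ := by
      have h2 : (t : ENNReal) < ENNReal.ofReal δ := htlt
      rw [ENNReal.lt_ofReal_iff_toReal_lt (by simp)] at h2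
      simpa using h2
    apply (ofc c).le_radius_of_summable_norm
    have := h.summable_norm 0 t.coe_nonneg ht
    apply this.congr
    intro n
    rw [Nat.add_zero, ofc, FormalMultilinearSeries.ofScalars_norm]
  · intro y hy
    rw [Metric.emetric_ball] at hy
    have h1 := h y hy
    have h2 : (fun n => (ofc c) n fun _ => y) = fun n => c n * y ^ n := by
      funext n; exact ofc_apply c n y
    rw [zero_add, h2]
    exact h1

lemma Exp.hasAt {c : ℕ → ℂ} {F : ℂ → ℂ} {δ : ℝ} (h : Exp c F δ) (hδ : 0 < δ) :
    HasFPowerSeriesAt F (ofc c) 0 :=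
  (h.hasFPS hδ).hasFPowerSeriesAt

lemma Exp.diffOn {c : ℕ → ℂ} {F : ℂ → ℂ} {δ : ℝ} (h : Exp c F δ) (hδ : 0 < δ) :
    DifferentiableOn ℂ F (ball 0 δ) := by
  have := (h.hasFPS hδ).differentiableOn
  rwa [Metric.emetric_ball] at this

lemma Exp.coeff_zero {c : ℕ → ℂ} {F : ℂ → ℂ} {δ : ℝ} (h : Exp c F δ) (hδ : 0 < δ) :
    c 0 = F 0 := by
  have h0 := h 0 (mem_ball_self hδ)
  have h1 : HasSum (fun n => c n * (0:ℂ) ^ n) (c 0) := by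
    simpa using hasSum_single (f := fun n => c n * (0:ℂ) ^ n) 0
      (fun b hb => by simp [zero_pow hb])
  exact h1.unique h0

lemma Exp.deriv_eq {c : ℕ → ℂ} {F : ℂ → ℂ} {δ : ℝ} (h : Exp c F δ) (hδ : 0 < δ) :
    deriv F 0 = c 1 := by
  rw [(h.hasAt hδ).deriv, ofc_apply, one_pow, mul_one]

lemma Exp.unique {c c' : ℕ → ℂ} {F : ℂ → ℂ} {δ δ' : ℝ} (h : Exp c F δ) (h' : Exp c' F δ')
    (hδ : 0 < δ) (hδ' : 0 < δ') : c = c' := by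
  have he : ofc c = ofc c' := (h.hasAt hδ).eq_formalMultilinearSeries (h'.hasAt hδ')
  funext n
  rw [← ofc_coeff c n, ← ofc_coeff c' n, he]

lemma mobius_bound {c0 w : ℂ} (hc : ‖c0‖ ≤ 1) (hw : ‖w‖ ≤ 1) :
    ‖w - c0‖ ≤ ‖1 - (starRingEnd ℂ) c0 * w‖ := by
  have h1 : Complex.normSq w ≤ 1 := by
    rw [Complex.normSq_eq_norm_sq]
    nlinarith [norm_nonneg w]
  have h2 : Complex.normSq c0 ≤ 1 := by
    rw [Complex.normSq_eq_norm_sq]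
    nlinarith [norm_nonneg c0]
  rw [Complex.norm_def, Complex.norm_def]
  apply Real.sqrt_le_sqrt
  simp only [Complex.normSq_apply, Complex.sub_re, Complex.sub_im, Complex.mul_re,
    Complex.mul_im, Complex.conj_re, Complex.conj_im, Complex.one_re, Complex.one_im] at h1 h2 ⊢
  nlinarith [mul_nonneg (sub_nonneg.mpr h1) (sub_nonneg.mpr h2)]

lemma schwarz_pick {d : ℕ → ℂ} {H : ℂ → ℂ} (h : Exp d H 1)
    (hb : ∀ z ∈ ball (0:ℂ) 1, ‖H z‖ ≤ 1) : ‖d 1‖ ≤ 1 - ‖d 0‖ ^ 2 := by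
  have h00 : d 0 = H 0 := h.coeff_zero one_pos
  have hd1 : deriv H 0 = d 1 := h.deriv_eq one_pos
  have hH : DifferentiableOn ℂ H (ball 0 1) := h.diffOn one_pos
  have hb0 : ‖d 0‖ ≤ 1 := by rw [h00]; exact hb 0 (mem_ball_self one_pos)
  rcases eq_or_lt_of_le hb0 with heq | hlt
  · -- constant case
    have hmax : IsMaxOn (norm ∘ H) (ball (0:ℂ) 1) 0 := by
      intro z hz
      simp only [Function.comp_apply]
      calc ‖H z‖ ≤ 1 := hb z hz
        _ = ‖H 0‖ := by rw [← h00, heq]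
    have hcst := Complex.eqOn_of_isPreconnected_of_isMaxOn_norm
      (convex_ball (0:ℂ) 1).isPreconnected isOpen_ball hH (mem_ball_self one_pos) hmax
    have hev : H =ᶠ[nhds (0:ℂ)] Function.const ℂ (H 0) :=
      Filter.eventuallyEq_of_mem (isOpen_ball.mem_nhds (mem_ball_self one_pos)) hcst
    have hzero : deriv H 0 = 0 := by
      rw [hev.deriv_eq]; exact deriv_const _ _
    rw [← hd1, hzero, norm_zero, heq]
    norm_num
  · -- Möbius case
    have hvne : ∀ z ∈ ball (0:ℂ) 1, (1:ℂ) - (starRingEnd ℂ) (d 0) * H z ≠ 0 := by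
      intro z hz hzero
      have h1 : ‖(starRingEnd ℂ) (d 0) * H z‖ < 1 := by
        rw [norm_mul, RCLike.norm_conj]
        calc ‖d 0‖ * ‖H z‖ ≤ ‖d 0‖ * 1 :=
              mul_le_mul_of_nonneg_left (hb z hz) (norm_nonneg _)
          _ < 1 := by simpa using hlt
      have h2 : (1:ℂ) = (starRingEnd ℂ) (d 0) * H z := by
        have := sub_eq_zero.mp hzero
        exact this
      rw [← h2] at h1
      simp at h1
    set m : ℂ → ℂ := fun z => (H z - d 0) / (1 - (starRingEnd ℂ) (d 0) * H z) with hmdef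
    have hmdiff : DifferentiableOn ℂ m (ball 0 1) := by
      apply DifferentiableOn.div (hH.sub_const (d 0))
        ((differentiableOn_const _).sub ((differentiableOn_const _).mul hH)) hvne
    have hm0 : m 0 = 0 := by
      show (H 0 - d 0) / (1 - (starRingEnd ℂ) (d 0) * H 0) = 0
      rw [← h00, sub_self, zero_div]
    have hmle : ∀ z ∈ ball (0:ℂ) 1, ‖m z‖ ≤ 1 := by
      intro z hz
      show ‖(H z - d 0) / (1 - (starRingEnd ℂ) (d 0) * H z)‖ ≤ 1
      rw [norm_div]
      exact div_le_one_of_le₀ (mobius_bound hb0 (hb z hz)) (norm_nonneg _)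
    have hkey : ∀ R : ℝ, 1 < R → ‖deriv m 0‖ ≤ R := by
      intro R hR
      have hmaps : Set.MapsTo m (ball (0:ℂ) 1) (ball (m 0) R) := by
        intro z hz
        rw [hm0, mem_ball_zero_iff]
        exact lt_of_le_of_lt (hmle z hz) hR
      simpa using Complex.norm_deriv_le_div_of_mapsTo_ball hmdiff (hmaps.mono_right ball_subset_closedBall) one_pos
    have hder1 : ‖deriv m 0‖ ≤ 1 := le_of_forall_gt_imp_ge_of_dense hkey
    have hH0 : DifferentiableAt ℂ H 0 := (h.hasAt one_pos).differentiableAt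
    have hv0 : (1:ℂ) - (starRingEnd ℂ) (d 0) * H 0 ≠ 0 := hvne 0 (mem_ball_self one_pos)
    have hvd : DifferentiableAt ℂ (fun z => (1:ℂ) - (starRingEnd ℂ) (d 0) * H z) 0 :=
      (differentiableAt_const _).sub ((differentiableAt_const _).mul hH0)
    have hv0' : (1:ℂ) - (starRingEnd ℂ) (d 0) * d 0 ≠ 0 := by
      have h3 := hv0
      rw [← h00] at h3
      exact h3
    have hdm : deriv m 0 = d 1 / (1 - (starRingEnd ℂ) (d 0) * d 0) := by
      rw [hmdef]
      rw [deriv_fun_div (hH0.sub_const (d 0)) hvd hv0]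
      rw [deriv_sub_const, hd1]
      have hderv : deriv (fun z => (1:ℂ) - (starRingEnd ℂ) (d 0) * H z) 0
          = -((starRingEnd ℂ) (d 0) * d 1) := by
        rw [deriv_const_sub, deriv_const_mul _ hH0, hd1]
      rw [hderv, ← h00]
      field_simp
      ring
    have hval : (1:ℂ) - (starRingEnd ℂ) (d 0) * d 0 = ((1 - ‖d 0‖ ^ 2 : ℝ) : ℂ) := by
      have hcc : (starRingEnd ℂ) (d 0) * d 0 = ((‖d 0‖ ^ 2 : ℝ) : ℂ) := by
        rw [mul_comm, Complex.mul_conj, Complex.normSq_eq_norm_sq]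
      rw [hcc]
      push_cast
      ring
    have hpos : (0:ℝ) < 1 - ‖d 0‖ ^ 2 := by nlinarith [norm_nonneg (d 0)]
    rw [hdm, hval, norm_div, Complex.norm_real, Real.norm_eq_abs, abs_of_pos hpos] at hder1
    exact (div_le_one hpos).mp hder1

lemma wiener {e : ℕ → ℂ} {ψ : ℂ → ℂ} (h : Exp e ψ 1)
    (hb : ∀ z ∈ ball (0:ℂ) 1, ‖ψ z‖ ≤ 1) {k : ℕ} (hk : k ≠ 0) :
    ‖e k‖ ≤ 1 - ‖e 0‖ ^ 2 := by
  have hk0 : 0 < (k:ℝ) := Nat.cast_pos.mpr (Nat.pos_of_ne_zero hk)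
  have hsub : ∀ w ∈ ball (0:ℂ) 1, Summable fun m => e (m * k) * w ^ m := by
    intro w hw
    rw [mem_ball_zero_iff] at hw
    set s : ℝ := ‖w‖ ^ ((k:ℝ)⁻¹) with hsdef
    have hs0 : 0 ≤ s := Real.rpow_nonneg (norm_nonneg w) _
    have hs1 : s < 1 := Real.rpow_lt_one (norm_nonneg w) hw (by positivity)
    obtain ⟨q, hq0, hq1, hsq⟩ : ∃ q : ℝ, 0 < q ∧ q < 1 ∧ s < q :=
      ⟨(s + 1) / 2, by linarith, by linarith, by linarith⟩
    have hwq : ‖w‖ < q ^ k := by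
      have h1 : s ^ k = ‖w‖ := Real.rpow_inv_natCast_pow (norm_nonneg w) hk
      rw [← h1]
      exact pow_lt_pow_left₀ hsq hs0 hk
    obtain ⟨B, hB0, hB⟩ := h.bound hq0 hq1
    apply Summable.of_norm
    apply Summable.of_nonneg_of_le (fun m => norm_nonneg _) (fun m => ?_)
      ((summable_geometric_of_lt_one (by positivity)
        ((div_lt_one (by positivity)).mpr hwq)).mul_left B)
    · rw [norm_mul, norm_pow]
      have h1 : ‖e (m * k)‖ ≤ B / q ^ (m * k) := (le_div_iff₀ (by positivity)).mpr (hB _)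
      calc ‖e (m * k)‖ * ‖w‖ ^ m ≤ B / q ^ (m * k) * ‖w‖ ^ m :=
            mul_le_mul_of_nonneg_right h1 (pow_nonneg (norm_nonneg w) m)
        _ = B * (‖w‖ / q ^ k) ^ m := by
            rw [div_pow, pow_mul]
            ring
  set G : ℂ → ℂ := fun w => ∑' m, e (m * k) * w ^ m with hGdef
  have hGexp : Exp (fun m => e (m * k)) G 1 := fun w hw => (hsub w hw).hasSum
  have hψ0 : ‖e 0‖ ≤ 1 := by
    rw [h.coeff_zero one_pos]
    exact hb 0 (mem_ball_self one_pos)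
  have hGval : ∀ w ∈ ball (0:ℂ) 1, ‖G w‖ ≤ 1 := by
    intro w hw
    rcases eq_or_ne w 0 with rfl | hw0
    · have hG0 : G 0 = e 0 := by
        have h1 := hGexp 0 (mem_ball_self one_pos)
        have h2 : HasSum (fun m => e (m * k) * (0:ℂ) ^ m) (e 0) := by
          simpa using hasSum_single (f := fun m => e (m * k) * (0:ℂ) ^ m) 0
            (fun b hb' => by simp [zero_pow hb'])
        exact (h2.unique h1).symm
      rw [hG0]; exact hψ0
    · obtain ⟨z, hzk, hz1⟩ : ∃ z : ℂ, z ^ k = w ∧ ‖z‖ < 1 := by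
        refine ⟨w ^ ((k:ℂ)⁻¹), Complex.cpow_nat_inv_pow w hk, ?_⟩
        by_contra hcon
        push_neg at hcon
        have h1 : (1:ℝ) ≤ ‖w ^ ((k:ℂ)⁻¹)‖ ^ k := by
          calc (1:ℝ) = 1 ^ k := (one_pow k).symm
            _ ≤ ‖w ^ ((k:ℂ)⁻¹)‖ ^ k := pow_le_pow_left₀ zero_le_one hcon k
        rw [← norm_pow, Complex.cpow_nat_inv_pow w hk] at h1
        rw [mem_ball_zero_iff] at hw
        linarith
      set ε : ℂ := Complex.exp (2 * Real.pi * Complex.I / k) with hεdef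
      have hprim : IsPrimitiveRoot ε k := Complex.isPrimitiveRoot_exp k hk
      have hεnorm : ‖ε‖ = 1 := by
        have h1 : ‖ε‖ ^ k = 1 := by rw [← norm_pow, hprim.pow_eq_one, norm_one]
        by_contra hne
        rcases lt_or_gt_of_ne hne with hlt' | hgt'
        · have h2 := pow_lt_one₀ (norm_nonneg ε) hlt' hk
          rw [h1] at h2
          exact lt_irrefl _ h2
        · have h2 := one_lt_pow₀ hgt' hk
          rw [h1] at h2
          exact lt_irrefl _ h2
      have hroot : ∀ n : ℕ, (∑ j ∈ range k, (ε ^ n) ^ j) = if k ∣ n then (k:ℂ) else 0 := by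
        intro n
        by_cases hdvd : k ∣ n
        · rw [if_pos hdvd]
          have h1 : ε ^ n = 1 := (hprim.pow_eq_one_iff_dvd n).mpr hdvd
          simp [h1]
        · rw [if_neg hdvd]
          have h1 : ε ^ n ≠ 1 := fun hcon => hdvd ((hprim.pow_eq_one_iff_dvd n).mp hcon)
          rw [geom_sum_eq h1]
          have h2 : (ε ^ n) ^ k = 1 := by
            rw [← pow_mul, mul_comm, pow_mul, hprim.pow_eq_one, one_pow]
          rw [h2]
          simp
      have hmem : ∀ j : ℕ, ε ^ j * z ∈ ball (0:ℂ) 1 := by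
        intro j
        rw [mem_ball_zero_iff, norm_mul, norm_pow, hεnorm, one_pow, one_mul]
        exact hz1
      have hsum1 : HasSum (fun n => ∑ j ∈ range k, e n * (ε ^ j * z) ^ n)
          (∑ j ∈ range k, ψ (ε ^ j * z)) := hasSum_sum fun j _ => h _ (hmem j)
      have hterm : (fun n => ∑ j ∈ range k, e n * (ε ^ j * z) ^ n)
          = fun n => (if k ∣ n then (k:ℂ) else 0) * (e n * z ^ n) := by
        funext n
        rw [← hroot n, Finset.sum_mul]
        apply Finset.sum_congr rfl
        intro j _
        rw [mul_pow, pow_right_comm]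
        ring
      rw [hterm] at hsum1
      have hinj : Function.Injective (fun m : ℕ => m * k) := fun m1 m2 hm =>
        Nat.eq_of_mul_eq_mul_right (Nat.pos_of_ne_zero hk) hm
      have hvan : ∀ n ∉ Set.range (fun m : ℕ => m * k),
          (if k ∣ n then (k:ℂ) else 0) * (e n * z ^ n) = 0 := by
        intro n hn
        rw [if_neg, zero_mul]
        intro hdvd
        exact hn ⟨n / k, Nat.div_mul_cancel hdvd⟩
      have hsum2 := (hinj.hasSum_iff hvan).mpr hsum1
      have hsimp : ((fun n => (if k ∣ n then (k:ℂ) else 0) * (e n * z ^ n))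
          ∘ (fun m : ℕ => m * k))
          = fun m => (k:ℂ) * (e (m * k) * (z ^ k) ^ m) := by
        funext m
        simp only [Function.comp_apply]
        rw [if_pos (dvd_mul_left k m), show z ^ (m * k) = (z ^ k) ^ m by
          rw [mul_comm, pow_mul]]
      rw [hsimp] at hsum2
      have hkC : (k:ℂ) ≠ 0 := Nat.cast_ne_zero.mpr hk
      have hsum3 : HasSum (fun m => e (m * k) * (z ^ k) ^ m)
          ((k:ℂ)⁻¹ * ∑ j ∈ range k, ψ (ε ^ j * z)) := by
        have h3 := hsum2.mul_left (k:ℂ)⁻¹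
        have h4 : (fun m => (k:ℂ)⁻¹ * ((k:ℂ) * (e (m * k) * (z ^ k) ^ m)))
            = fun m => e (m * k) * (z ^ k) ^ m := by
          funext m
          rw [← mul_assoc, inv_mul_cancel₀ hkC, one_mul]
        rwa [h4] at h3
      have hGw : G w = (k:ℂ)⁻¹ * ∑ j ∈ range k, ψ (ε ^ j * z) := by
        have h5 : HasSum (fun m => e (m * k) * w ^ m)
            ((k:ℂ)⁻¹ * ∑ j ∈ range k, ψ (ε ^ j * z)) := by rwa [hzk] at hsum3
        exact (hGexp w hw).unique h5
      rw [hGw, norm_mul]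
      have hsumle : ‖∑ j ∈ range k, ψ (ε ^ j * z)‖ ≤ (k:ℝ) := by
        calc ‖∑ j ∈ range k, ψ (ε ^ j * z)‖ ≤ ∑ j ∈ range k, ‖ψ (ε ^ j * z)‖ :=
              norm_sum_le _ _
          _ ≤ ∑ _j ∈ range k, 1 := Finset.sum_le_sum fun j _ => hb _ (hmem j)
          _ = k := by simp
      have hninv : ‖((k:ℂ))⁻¹‖ = (k:ℝ)⁻¹ := by
        rw [norm_inv, Complex.norm_natCast]
      rw [hninv]
      calc (k:ℝ)⁻¹ * ‖∑ j ∈ range k, ψ (ε ^ j * z)‖ ≤ (k:ℝ)⁻¹ * (k:ℝ) :=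
            mul_le_mul_of_nonneg_left hsumle (by positivity)
        _ = 1 := inv_mul_cancel₀ (ne_of_gt hk0)
  have hmain := schwarz_pick hGexp hGval
  simpa using hmain

lemma bohr {e : ℕ → ℂ} {ψ : ℂ → ℂ} (h : Exp e ψ 1)
    (hb : ∀ z ∈ ball (0:ℂ) 1, ‖ψ z‖ ≤ 1) {r : ℝ} (hr0 : 0 ≤ r) (hr : r ≤ 1/3) :
    ∑' n, (‖e n‖₊ : ENNReal) * (ENNReal.ofReal r) ^ n ≤ 1 := by
  set t := ‖e 0‖ with htdef
  have ht1 : t ≤ 1 := by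
    rw [htdef, h.coeff_zero one_pos]
    exact hb 0 (mem_ball_self one_pos)
  have ht0 : 0 ≤ t := norm_nonneg _
  have hcoef : ∀ n : ℕ, ‖e (n + 1)‖ ≤ 1 - t ^ 2 := fun n => wiener h hb (Nat.succ_ne_zero n)
  have h1t2 : (0:ℝ) ≤ 1 - t ^ 2 := by nlinarith
  set R := ENNReal.ofReal r with hRdef
  have hsplit : ∑' n, (‖e n‖₊ : ENNReal) * R ^ n
      = (‖e 0‖₊ : ENNReal) + ∑' n, (‖e (n + 1)‖₊ : ENNReal) * R ^ (n + 1) := by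
    rw [tsum_eq_zero_add' ENNReal.summable]
    simp
  rw [hsplit]
  have hterm : ∀ n : ℕ, (‖e (n + 1)‖₊ : ENNReal) * R ^ (n + 1)
      ≤ ENNReal.ofReal ((1 - t ^ 2) * r) * R ^ n := by
    intro n
    rw [pow_succ]
    calc (‖e (n + 1)‖₊ : ENNReal) * (R ^ n * R)
        = ((‖e (n + 1)‖₊ : ENNReal) * R) * R ^ n := by ring
      _ ≤ (ENNReal.ofReal (1 - t ^ 2) * ENNReal.ofReal r) * R ^ n := by
          gcongr
          rw [← enorm_eq_nnnorm, ← ofReal_norm]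
          exact ENNReal.ofReal_le_ofReal (hcoef n)
      _ = ENNReal.ofReal ((1 - t ^ 2) * r) * R ^ n := by
          rw [← ENNReal.ofReal_mul h1t2]
  calc (‖e 0‖₊ : ENNReal) + ∑' n, (‖e (n + 1)‖₊ : ENNReal) * R ^ (n + 1)
      ≤ ENNReal.ofReal t + ∑' n, ENNReal.ofReal ((1 - t ^ 2) * r) * R ^ n := by
        apply add_le_add
        · rw [← enorm_eq_nnnorm, ← ofReal_norm]
        · exact ENNReal.tsum_le_tsum hterm
    _ = ENNReal.ofReal t + ENNReal.ofReal ((1 - t ^ 2) * r) * (1 - R)⁻¹ := by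
        rw [ENNReal.tsum_mul_left, ENNReal.tsum_geometric]
    _ ≤ ENNReal.ofReal t + ENNReal.ofReal ((1 - t ^ 2) * r) * ENNReal.ofReal (3/2) := by
        gcongr
        have h23 : ENNReal.ofReal (2/3) ≤ 1 - R := by
          have hR13 : R ≤ ENNReal.ofReal (1/3) := ENNReal.ofReal_le_ofReal hr
          have hle : (1:ENNReal) - ENNReal.ofReal (1/3) ≤ 1 - R := tsub_le_tsub_left hR13 1
          have heq23 : (1:ENNReal) - ENNReal.ofReal (1/3) = ENNReal.ofReal (2/3) := by
            rw [← ENNReal.ofReal_one, ← ENNReal.ofReal_sub _ (by norm_num)]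
            norm_num
          rwa [heq23] at hle
        calc (1 - R)⁻¹ ≤ (ENNReal.ofReal (2/3))⁻¹ := ENNReal.inv_le_inv.mpr h23
          _ = ENNReal.ofReal (3/2) := by
            rw [← ENNReal.ofReal_inv_of_pos (by norm_num : (0:ℝ) < 2/3)]
            norm_num
    _ ≤ 1 := by
        rw [← ENNReal.ofReal_mul (by positivity), ← ENNReal.ofReal_add ht0 (by positivity)]
        rw [← ENNReal.ofReal_one]
        apply ENNReal.ofReal_le_ofReal
        nlinarith [sq_nonneg (1 - t), mul_le_mul_of_nonneg_left hr h1t2]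

lemma schwarz_shift {φ : ℂ → ℂ} {c : ℕ → ℂ}
    (hφ : DifferentiableOn ℂ φ (ball 0 1))
    (hφmap : ∀ z ∈ ball (0:ℂ) 1, φ z ∈ ball (0:ℂ) 1)
    (hφ0 : φ 0 = 0) (hc : Exp c φ 1) {r : ℝ} (hr0 : 0 ≤ r) (hr : r ≤ 1/3) :
    majorant c r ≤ ENNReal.ofReal r := by
  have hc0 : c 0 = 0 := by rw [hc.coeff_zero one_pos, hφ0]
  have hsub : ∀ w ∈ ball (0:ℂ) 1, Summable fun n => c (n + 1) * w ^ n := by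
    intro w hw
    rw [mem_ball_zero_iff] at hw
    apply Summable.of_norm
    exact (hc.summable_norm 1 (norm_nonneg w) hw).congr fun n => by
      rw [norm_mul, norm_pow]
  set ψ : ℂ → ℂ := fun w => ∑' n, c (n + 1) * w ^ n with hψdef
  have hψexp : Exp (fun n => c (n + 1)) ψ 1 := fun w hw => (hsub w hw).hasSum
  have hlink : ∀ z ∈ ball (0:ℂ) 1, φ z = z * ψ z := by
    intro z hz
    have h1 := (hψexp z hz).mul_left z
    have hfun : (fun n => z * (c (n + 1) * z ^ n)) = fun n => c (n + 1) * z ^ (n + 1) := by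
      funext n
      ring
    rw [hfun] at h1
    have h3 := (hasSum_nat_add_iff (f := fun n => c n * z ^ n) 1).mp h1
    simp only [Finset.range_one, Finset.sum_singleton, hc0, zero_mul, add_zero] at h3
    exact (hc z hz).unique h3
  have hψle : ∀ z ∈ ball (0:ℂ) 1, ‖ψ z‖ ≤ 1 := by
    intro z hz
    rcases eq_or_ne z 0 with rfl | hz0
    · have h1 : ψ 0 = c 1 := (hψexp.coeff_zero one_pos).symm
      have h2 : deriv φ 0 = c 1 := hc.deriv_eq one_pos
      have h3 : ‖deriv φ 0‖ ≤ 1 := by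
        have h4 := Complex.norm_deriv_le_div_of_mapsTo_ball hφ
          (fun x hx => by rw [hφ0]; exact ball_subset_closedBall (hφmap x hx)) one_pos
        simpa using h4
      rw [h1, ← h2]
      exact h3
    · have hz1 : ‖z‖ < 1 := mem_ball_zero_iff.mp hz
      have hschwarz : ‖φ z‖ ≤ ‖z‖ := by
        have h5 := Complex.dist_le_dist_of_mapsTo_ball_self hφ
          (fun x hx => by rw [hφ0]; exact ball_subset_closedBall (hφmap x hx)) hz
        simpa [dist_zero_right, hφ0] using h5
      have h4 : ‖z‖ * ‖ψ z‖ ≤ ‖z‖ * 1 := by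
        rw [mul_one, ← norm_mul, ← hlink z hz]
        exact hschwarz
      exact le_of_mul_le_mul_left h4 (norm_pos_iff.mpr hz0)
  have hbohr := bohr hψexp hψle hr0 hr
  have hmaj : majorant c r
      = ENNReal.ofReal r * ∑' n, (‖c (n + 1)‖₊ : ENNReal) * (ENNReal.ofReal r) ^ n := by
    rw [majorant, tsum_eq_zero_add' ENNReal.summable]
    have h0 : (‖c 0‖₊ : ENNReal) * (ENNReal.ofReal r) ^ 0 = 0 := by simp [hc0]
    rw [h0, zero_add, ← ENNReal.tsum_mul_left]
    apply tsum_congr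
    intro n
    rw [pow_succ]
    ring
  rw [hmaj]
  calc ENNReal.ofReal r * ∑' n, (‖c (n + 1)‖₊ : ENNReal) * (ENNReal.ofReal r) ^ n
      ≤ ENNReal.ofReal r * 1 := mul_le_mul_right hbohr _
    _ = ENNReal.ofReal r := mul_one _

noncomputable def conv (c d : ℕ → ℂ) (k : ℕ) : ℂ :=
  ∑ p ∈ Finset.HasAntidiagonal.antidiagonal k, c p.1 * d p.2

lemma Exp.mul {c d : ℕ → ℂ} {F G : ℂ → ℂ} (hF : Exp c F 1) (hG : Exp d G 1) :
    Exp (conv c d) (fun z => F z * G z) 1 := by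
  intro z hz
  have hz1 : ‖z‖ < 1 := mem_ball_zero_iff.mp hz
  have hcs : Summable fun n => ‖c n * z ^ n‖ := hF.summable_norm_mul hz1
  have hds : Summable fun n => ‖d n * z ^ n‖ := hG.summable_norm_mul hz1
  have heq : ∀ n, (∑ p ∈ Finset.HasAntidiagonal.antidiagonal n, (c p.1 * z ^ p.1) * (d p.2 * z ^ p.2))
      = conv c d n * z ^ n := by
    intro n
    rw [conv, Finset.sum_mul]
    apply Finset.sum_congr rfl
    intro p hp
    have hpn : p.1 + p.2 = n := Finset.HasAntidiagonal.mem_antidiagonal.mp hp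
    rw [← hpn, pow_add]
    ring
  have hsum : Summable fun n => conv c d n * z ^ n := by
    apply Summable.of_norm
    exact (summable_norm_sum_mul_antidiagonal_of_summable_norm hcs hds).congr
      fun n => by rw [heq n]
  have htsum : ∑' n, conv c d n * z ^ n = F z * G z := by
    have h2 := tsum_mul_tsum_eq_tsum_sum_antidiagonal_of_summable_norm hcs hds
    rw [(hF z hz).tsum_eq, (hG z hz).tsum_eq] at h2
    calc ∑' n, conv c d n * z ^ n
        = ∑' n, ∑ p ∈ Finset.HasAntidiagonal.antidiagonal n, (c p.1 * z ^ p.1) * (d p.2 * z ^ p.2) :=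
          tsum_congr fun n => (heq n).symm
      _ = F z * G z := h2.symm
  have hfinal := hsum.hasSum
  rw [htsum] at hfinal
  exact hfinal

lemma majorant_conv_le (c d : ℕ → ℂ) (r : ℝ) :
    majorant (conv c d) r ≤ majorant c r * majorant d r := by
  set R := ENNReal.ofReal r with hR
  set W : ℕ × ℕ → ENNReal :=
    fun p => ((‖c p.1‖₊ : ENNReal) * R ^ p.1) * ((‖d p.2‖₊ : ENNReal) * R ^ p.2) with hW
  have step1 : ∀ k, (‖conv c d k‖₊ : ENNReal) * R ^ k ≤ ∑ p ∈ Finset.HasAntidiagonal.antidiagonal k, W p := by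
    intro k
    have h1 : (‖conv c d k‖₊ : ENNReal)
        ≤ ∑ p ∈ Finset.HasAntidiagonal.antidiagonal k, (‖c p.1‖₊ : ENNReal) * (‖d p.2‖₊ : ENNReal) := by
      calc (‖conv c d k‖₊ : ENNReal)
          ≤ ((∑ p ∈ Finset.HasAntidiagonal.antidiagonal k, ‖c p.1 * d p.2‖₊ : NNReal) : ENNReal) := by
            exact_mod_cast nnnorm_sum_le _ _
        _ = ∑ p ∈ Finset.HasAntidiagonal.antidiagonal k, (‖c p.1 * d p.2‖₊ : ENNReal) := by
            rw [ENNReal.coe_finset_sum]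
        _ = ∑ p ∈ Finset.HasAntidiagonal.antidiagonal k, (‖c p.1‖₊ : ENNReal) * (‖d p.2‖₊ : ENNReal) := by
            apply Finset.sum_congr rfl
            intro p _
            rw [nnnorm_mul, ENNReal.coe_mul]
    calc (‖conv c d k‖₊ : ENNReal) * R ^ k
        ≤ (∑ p ∈ Finset.HasAntidiagonal.antidiagonal k, (‖c p.1‖₊ : ENNReal) * (‖d p.2‖₊ : ENNReal)) * R ^ k :=
          mul_le_mul_left h1 _
      _ = ∑ p ∈ Finset.HasAntidiagonal.antidiagonal k, ((‖c p.1‖₊ : ENNReal) * (‖d p.2‖₊ : ENNReal)) * R ^ k :=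
          Finset.sum_mul _ _ _
      _ = ∑ p ∈ Finset.HasAntidiagonal.antidiagonal k, W p := by
          apply Finset.sum_congr rfl
          intro p hp
          have hpk : p.1 + p.2 = k := Finset.HasAntidiagonal.mem_antidiagonal.mp hp
          rw [hW]
          simp only
          rw [← hpk, pow_add]
          ring
  have hsig : ∑' k, (∑ p ∈ Finset.HasAntidiagonal.antidiagonal k, W p) = ∑' (p : ℕ × ℕ), W p := by
    have h1 : ∀ k, (∑ p ∈ Finset.HasAntidiagonal.antidiagonal k, W p)
        = ∑' (p : (Finset.HasAntidiagonal.antidiagonal k : Finset (ℕ × ℕ))), W p :=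
      fun k => (Finset.tsum_subtype _ _).symm
    rw [tsum_congr h1]
    have h2 := ENNReal.tsum_sigma'
      (f := fun x : (Σ k : ℕ, (Finset.HasAntidiagonal.antidiagonal k : Finset (ℕ × ℕ))) => W x.2)
    rw [← h2]
    exact Finset.HasAntidiagonal.sigmaAntidiagonalEquivProd.tsum_eq W
  calc majorant (conv c d) r ≤ ∑' k, (∑ p ∈ Finset.HasAntidiagonal.antidiagonal k, W p) :=
        ENNReal.tsum_le_tsum step1
    _ = ∑' (p : ℕ × ℕ), W p := hsig
    _ = majorant c r * majorant d r := by
        rw [ENNReal.tsum_prod']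
        rw [majorant, majorant]
        calc ∑' (i : ℕ), ∑' (j : ℕ), W (i, j)
            = ∑' (i : ℕ), ((‖c i‖₊ : ENNReal) * R ^ i) * ∑' (j : ℕ), ((‖d j‖₊ : ENNReal) * R ^ j) := by
              apply tsum_congr
              intro i
              rw [← ENNReal.tsum_mul_left]
          _ = (∑' (i : ℕ), (‖c i‖₊ : ENNReal) * R ^ i) * ∑' (j : ℕ), ((‖d j‖₊ : ENNReal) * R ^ j) := by
              rw [← ENNReal.tsum_mul_right]

noncomputable def cp (c : ℕ → ℂ) : ℕ → ℕ → ℂ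
  | 0 => fun k => if k = 0 then 1 else 0
  | n + 1 => conv c (cp c n)

lemma cp_exp {c : ℕ → ℂ} {φ : ℂ → ℂ} (h : Exp c φ 1) :
    ∀ n, Exp (cp c n) (fun z => φ z ^ n) 1 := by
  intro n
  induction n with
  | zero =>
    intro z hz
    have h1 := hasSum_single (f := fun k => (if k = 0 then (1:ℂ) else 0) * z ^ k) 0
      (fun b hb => by simp [if_neg hb])
    simpa [cp] using h1
  | succ n ih =>
    have h2 := Exp.mul h ih
    intro z hz
    have h3 := h2 z hz
    have h4 : φ z * φ z ^ n = φ z ^ (n + 1) := (pow_succ' (φ z) n).symm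
    show HasSum (fun m => cp c (n + 1) m * z ^ m) (φ z ^ (n + 1))
    rw [← h4]
    exact h3

lemma cp_vanish {c : ℕ → ℂ} (hc0 : c 0 = 0) : ∀ n k, k < n → cp c n k = 0 := by
  intro n
  induction n with
  | zero => intro k hk; exact absurd hk (Nat.not_lt_zero k)
  | succ n ih =>
    intro k hk
    show conv c (cp c n) k = 0
    apply Finset.sum_eq_zero
    rintro ⟨i, j⟩ hp
    have hij : i + j = k := Finset.HasAntidiagonal.mem_antidiagonal.mp hp
    rcases Nat.eq_zero_or_pos i with rfl | hi
    · rw [hc0, zero_mul]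
    · rw [ih j (by omega), mul_zero]

lemma cp_majorant {c : ℕ → ℂ} {r : ℝ} (hmc : majorant c r ≤ ENNReal.ofReal r) :
    ∀ n, majorant (cp c n) r ≤ (ENNReal.ofReal r) ^ n := by
  intro n
  induction n with
  | zero =>
    rw [pow_zero]
    have h1 : majorant (cp c 0) r = 1 := by
      rw [majorant, tsum_eq_single 0 (fun b hb => by simp [cp, if_neg hb])]
      simp [cp]
    exact le_of_eq h1
  | succ n ih =>
    calc majorant (cp c (n + 1)) r = majorant (conv c (cp c n)) r := rfl
      _ ≤ majorant c r * majorant (cp c n) r := majorant_conv_le _ _ _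
      _ ≤ ENNReal.ofReal r * (ENNReal.ofReal r) ^ n := mul_le_mul' hmc ih
      _ = (ENNReal.ofReal r) ^ (n + 1) := (pow_succ' _ _).symm

lemma exists_exp {φ : ℂ → ℂ} (hφ : DifferentiableOn ℂ φ (ball 0 1)) :
    ∃ c : ℕ → ℂ, Exp c φ 1 := by
  have main : ∀ ρ : NNReal, 0 < ρ → (ρ : ℝ) < 1 →
      HasFPowerSeriesOnBall φ (cauchyPowerSeries φ 0 ρ) 0 ρ := by
    intro ρ h0 h1
    exact (hφ.mono (closedBall_subset_ball h1)).hasFPowerSeriesOnBall h0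
  refine ⟨fun n => (cauchyPowerSeries φ 0 (1/2 : NNReal)).coeff n, ?_⟩
  intro z hz
  rw [mem_ball_zero_iff] at hz
  set ρ : NNReal := ⟨(‖z‖ + 1) / 2, by positivity⟩ with hρdef
  have hρc : (ρ : ℝ) = (‖z‖ + 1) / 2 := rfl
  have hρz : ‖z‖ < (ρ : ℝ) := by rw [hρc]; linarith
  have hρ1 : (ρ : ℝ) < 1 := by rw [hρc]; linarith
  have hρ0 : 0 < ρ := by
    rw [← NNReal.coe_lt_coe, hρc]
    positivity
  have h1 := main ρ hρ0 hρ1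
  have h2 := main (1/2) (by norm_num) (by norm_num)
  have heq : cauchyPowerSeries φ 0 ρ = cauchyPowerSeries φ 0 (1/2 : NNReal) :=
    h1.hasFPowerSeriesAt.eq_formalMultilinearSeries h2.hasFPowerSeriesAt
  have hmem : z ∈ EMetric.ball (0:ℂ) ρ := by
    show z ∈ Metric.eball (0:ℂ) ρ
    rw [Metric.emetric_ball_nnreal]
    exact mem_ball_zero_iff.mpr hρz
  have h3 := h1.hasSum hmem
  rw [heq, zero_add] at h3
  have h4 : (fun n => (cauchyPowerSeries φ 0 (1/2 : NNReal)) n fun _ => z)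
      = fun n => (cauchyPowerSeries φ 0 (1/2 : NNReal)).coeff n * z ^ n := by
    funext n
    rw [FormalMultilinearSeries.apply_eq_pow_smul_coeff, smul_eq_mul]
    ring
  rw [h4] at h3
  exact h3

end BohrSub

theorem bohr_subordination (f g φ : ℂ → ℂ) (a b : ℕ → ℂ)
    (hφ : DifferentiableOn ℂ φ (ball 0 1))
    (hφmap : ∀ z ∈ ball (0:ℂ) 1, φ z ∈ ball (0:ℂ) 1)
    (hφ0 : φ 0 = 0)
    (hsub : ∀ z ∈ ball (0:ℂ) 1, f z = g (φ z))
    (ha : ∀ z ∈ ball (0:ℂ) 1, HasSum (fun n => a n * z ^ n) (f z))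
    (hb : ∀ z ∈ ball (0:ℂ) 1, HasSum (fun n => b n * z ^ n) (g z)) :
    ∀ r : ℝ, 0 ≤ r → r ≤ 1/3 → majorant a r ≤ majorant b r := by
  intro r hr0 hr13
  obtain ⟨c, hc⟩ := BohrSub.exists_exp hφ
  have hc0 : c 0 = 0 := by rw [hc.coeff_zero one_pos, hφ0]
  have hcpexp := BohrSub.cp_exp hc
  have hvan : ∀ n k, k < n → BohrSub.cp c n k = 0 := BohrSub.cp_vanish hc0
  have hmaj : ∀ s : ℝ, 0 ≤ s → s ≤ 1/3 → ∀ n,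
      majorant (BohrSub.cp c n) s ≤ (ENNReal.ofReal s) ^ n :=
    fun s h1 h2 => BohrSub.cp_majorant (BohrSub.schwarz_shift hφ hφmap hφ0 hc h1 h2)
  have hcpb : ∀ n k, ‖BohrSub.cp c n k‖ ≤ 3 ^ k * (1/3 : ℝ) ^ n := by
    intro n k
    have h1 : (‖BohrSub.cp c n k‖₊ : ENNReal) * (ENNReal.ofReal (1/3 : ℝ)) ^ k
        ≤ (ENNReal.ofReal (1/3 : ℝ)) ^ n :=
      le_trans (ENNReal.le_tsum k) (hmaj (1/3) (by norm_num) le_rfl n)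
    rw [← ENNReal.ofReal_pow (by norm_num), ← ENNReal.ofReal_pow (by norm_num),
      ← enorm_eq_nnnorm, ← ofReal_norm, ← ENNReal.ofReal_mul (norm_nonneg _)] at h1
    have h2 : ‖BohrSub.cp c n k‖ * (1/3 : ℝ) ^ k ≤ (1/3 : ℝ) ^ n :=
      (ENNReal.ofReal_le_ofReal_iff (by positivity)).mp h1
    have h5 : ((1:ℝ)/3) ^ k * 3 ^ k = 1 := by
      rw [← mul_pow]; norm_num
    calc ‖BohrSub.cp c n k‖ = ‖BohrSub.cp c n k‖ * (((1:ℝ)/3) ^ k * 3 ^ k) := by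
          rw [h5, mul_one]
      _ = (‖BohrSub.cp c n k‖ * ((1:ℝ)/3) ^ k) * 3 ^ k := by ring
      _ ≤ (1/3 : ℝ) ^ n * 3 ^ k := mul_le_mul_of_nonneg_right h2 (by positivity)
      _ = 3 ^ k * (1/3 : ℝ) ^ n := mul_comm _ _
  obtain ⟨B, hB0, hBb⟩ :=
    BohrSub.Exp.bound (c := b) (F := g) (δ := 1) hb (q := 1/2) (by norm_num) (by norm_num)
  have hbn : ∀ n, ‖b n‖ ≤ B * 2 ^ n := by
    intro n
    have h6 : ((1:ℝ)/2) ^ n * 2 ^ n = 1 := by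
      rw [← mul_pow]; norm_num
    calc ‖b n‖ = ‖b n‖ * (((1:ℝ)/2) ^ n * 2 ^ n) := by rw [h6, mul_one]
      _ = (‖b n‖ * ((1:ℝ)/2) ^ n) * 2 ^ n := by ring
      _ ≤ B * 2 ^ n := mul_le_mul_of_nonneg_right (hBb n) (by positivity)
  have hkey : BohrSub.Exp (fun k => ∑ n ∈ Finset.range (k+1), b n * BohrSub.cp c n k) f (1/4) := by
    intro z hz
    have hz4 : ‖z‖ < 1/4 := mem_ball_zero_iff.mp hz
    have hz1 : z ∈ ball (0:ℂ) 1 := mem_ball_zero_iff.mpr (by linarith)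
    set F : ℕ × ℕ → ℂ := fun p => b p.1 * (BohrSub.cp c p.1 p.2 * z ^ p.2) with hFdef
    have hFnorm : ∀ p : ℕ × ℕ, ‖F p‖ ≤ (B * (2/3 : ℝ) ^ p.1) * ((3:ℝ) * ‖z‖) ^ p.2 := by
      rintro ⟨n, k⟩
      show ‖b n * (BohrSub.cp c n k * z ^ k)‖ ≤ _
      rw [norm_mul, norm_mul, norm_pow]
      calc ‖b n‖ * (‖BohrSub.cp c n k‖ * ‖z‖ ^ k)
          ≤ (B * 2 ^ n) * ((3 ^ k * (1/3 : ℝ) ^ n) * ‖z‖ ^ k) := by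
            apply mul_le_mul (hbn n) ?_ (by positivity) (by positivity)
            exact mul_le_mul_of_nonneg_right (hcpb n k) (by positivity)
        _ = (B * (2/3 : ℝ) ^ n) * ((3:ℝ) * ‖z‖) ^ k := by
            rw [mul_pow, div_pow]
            field_simp
            have h23 : ((2:ℝ)/3) ^ n * 3 ^ n = 2 ^ n := by rw [← mul_pow]; norm_num
            rw [one_pow, mul_one, ← h23]
            ring
    have hFs : Summable F := by
      apply Summable.of_norm
      apply Summable.of_nonneg_of_le (fun p => norm_nonneg _) hFnorm ?_
      have hsum1 : Summable (fun n : ℕ => B * (2/3 : ℝ) ^ n) :=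
        (summable_geometric_of_lt_one (by norm_num) (by norm_num)).mul_left B
      have hsum2 : Summable (fun k : ℕ => ((3:ℝ) * ‖z‖) ^ k) :=
        summable_geometric_of_lt_one (by positivity) (by linarith)
      exact hsum1.mul_of_nonneg hsum2 (fun n => by positivity) (fun k => by positivity)
    have hfib : ∀ n : ℕ, HasSum (fun k => F (n, k)) (b n * φ z ^ n) := fun n =>
      (hcpexp n z hz1).mul_left (b n)
    have hgsum : HasSum (fun n => b n * φ z ^ n) (f z) := by
      have h6 := hb (φ z) (hφmap z hz1)
      rw [← hsub z hz1] at h6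
      exact h6
    have hFsum : HasSum F (f z) := by
      have h7 := hFs.hasSum
      have h8 := h7.prod_fiberwise hfib
      rw [h8.unique hgsum] at h7
      exact h7
    have hswap : HasSum (fun p : ℕ × ℕ => F (p.2, p.1)) (f z) :=
      ((Equiv.prodComm ℕ ℕ).hasSum_iff (f := F)).mpr hFsum
    have hfib2 : ∀ k : ℕ, HasSum (fun n => F (n, k))
        ((∑ n ∈ Finset.range (k+1), b n * BohrSub.cp c n k) * z ^ k) := by
      intro k
      have h9 : ∀ n ∉ Finset.range (k+1), F (n, k) = 0 := by
        intro n hn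
        rw [Finset.mem_range] at hn
        have hkn : k < n := by omega
        show b n * (BohrSub.cp c n k * z ^ k) = 0
        rw [hvan n k hkn, zero_mul, mul_zero]
      have h10 := hasSum_sum_of_ne_finset_zero (L := SummationFilter.unconditional ℕ) h9
      have h11 : (∑ n ∈ Finset.range (k+1), b n * BohrSub.cp c n k) * z ^ k
          = ∑ n ∈ Finset.range (k+1), F (n, k) := by
        rw [Finset.sum_mul]
        apply Finset.sum_congr rfl
        intro n _
        show b n * BohrSub.cp c n k * z ^ k = b n * (BohrSub.cp c n k * z ^ k)
        ring
      rw [h11]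
      exact h10
    exact hswap.prod_fiberwise hfib2
  have hA : a = fun k => ∑ n ∈ Finset.range (k+1), b n * BohrSub.cp c n k :=
    BohrSub.Exp.unique ha hkey one_pos (by norm_num)
  have hW : ∀ k, (‖a k‖₊ : ENNReal) * (ENNReal.ofReal r) ^ k
      ≤ ∑' n, ((‖b n‖₊ : ENNReal) * ((‖BohrSub.cp c n k‖₊ : ENNReal) * (ENNReal.ofReal r) ^ k)) := by
    intro k
    have h12 : (‖a k‖₊ : ENNReal)
        ≤ ∑ n ∈ Finset.range (k+1), (‖b n‖₊ : ENNReal) * (‖BohrSub.cp c n k‖₊ : ENNReal) := by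
      rw [hA]
      calc ((‖∑ n ∈ Finset.range (k+1), b n * BohrSub.cp c n k‖₊ : NNReal) : ENNReal)
          ≤ ((∑ n ∈ Finset.range (k+1), ‖b n * BohrSub.cp c n k‖₊ : NNReal) : ENNReal) := by
            exact_mod_cast nnnorm_sum_le _ _
        _ = ∑ n ∈ Finset.range (k+1), ((‖b n * BohrSub.cp c n k‖₊ : NNReal) : ENNReal) := by
            rw [ENNReal.coe_finset_sum]
        _ = ∑ n ∈ Finset.range (k+1), (‖b n‖₊ : ENNReal) * (‖BohrSub.cp c n k‖₊ : ENNReal) := by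
            apply Finset.sum_congr rfl
            intro n _
            rw [nnnorm_mul, ENNReal.coe_mul]
    have hvan2 : ∀ n ∉ Finset.range (k+1),
        (‖b n‖₊ : ENNReal) * ((‖BohrSub.cp c n k‖₊ : ENNReal) * (ENNReal.ofReal r) ^ k) = 0 := by
      intro n hn
      rw [Finset.mem_range] at hn
      have hkn : k < n := by omega
      rw [hvan n k hkn]
      simp
    calc (‖a k‖₊ : ENNReal) * (ENNReal.ofReal r) ^ k
        ≤ (∑ n ∈ Finset.range (k+1), (‖b n‖₊ : ENNReal) * (‖BohrSub.cp c n k‖₊ : ENNReal))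
            * (ENNReal.ofReal r) ^ k := mul_le_mul_left h12 _
      _ = ∑ n ∈ Finset.range (k+1),
            (‖b n‖₊ : ENNReal) * ((‖BohrSub.cp c n k‖₊ : ENNReal) * (ENNReal.ofReal r) ^ k) := by
          rw [Finset.sum_mul]
          apply Finset.sum_congr rfl
          intro n _
          ring
      _ = ∑' n, ((‖b n‖₊ : ENNReal) * ((‖BohrSub.cp c n k‖₊ : ENNReal) * (ENNReal.ofReal r) ^ k)) :=
          (tsum_eq_sum hvan2).symm
  calc majorant a r
      = ∑' k, (‖a k‖₊ : ENNReal) * (ENNReal.ofReal r) ^ k := rfl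
    _ ≤ ∑' k, ∑' n, ((‖b n‖₊ : ENNReal) * ((‖BohrSub.cp c n k‖₊ : ENNReal) * (ENNReal.ofReal r) ^ k)) :=
        ENNReal.tsum_le_tsum hW
    _ = ∑' n, ∑' k, ((‖b n‖₊ : ENNReal) * ((‖BohrSub.cp c n k‖₊ : ENNReal) * (ENNReal.ofReal r) ^ k)) :=
        ENNReal.tsum_comm
    _ = ∑' n, (‖b n‖₊ : ENNReal) * majorant (BohrSub.cp c n) r := by
        apply tsum_congr
        intro n
        rw [ENNReal.tsum_mul_left]
        rfl
    _ ≤ ∑' n, (‖b n‖₊ : ENNReal) * (ENNReal.ofReal r) ^ n :=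
        ENNReal.tsum_le_tsum fun n => mul_le_mul_right (hmaj r hr0 hr13 n) _
    _ = majorant b r := rfl
end

section
/- Let f : 𝔻 → ℂ be analytic with |f(z)| ≤ 1 on 𝔻 and f(z) = Σ a_n z^n. Then for each n ≥ 1, |a_n| ≤ 1 - |a_0|². -/
open Metric

open Complex Filter

private lemma summable_aux {a : ℕ → ℂ}
    (h : ∀ z ∈ ball (0:ℂ) 1, Summable (fun n => a n * z ^ n))
    {r : ℝ} (h0 : 0 ≤ r) (h1 : r < 1) : Summable (fun n => ‖a n‖ * r ^ n) := by
  set s : ℝ := (r + 1) / 2 with hs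
  have hrs : r < s := by rw [hs]; linarith
  have hs0 : 0 < s := by rw [hs]; linarith
  have hs1 : s < 1 := by rw [hs]; linarith
  have hz : (s : ℂ) ∈ ball (0:ℂ) 1 := by
    rw [mem_ball_zero_iff, Complex.norm_real, Real.norm_eq_abs, abs_of_pos hs0]
    exact hs1
  have hsum := h _ hz
  have hten : Tendsto (fun n => ‖a n * (s:ℂ) ^ n‖) atTop (nhds 0) := by
    simpa using hsum.tendsto_atTop_zero.norm
  obtain ⟨C, hC⟩ := hten.bddAbove_range
  have hC' : ∀ n, ‖a n‖ * s ^ n ≤ C := by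
    intro n
    have := hC (Set.mem_range_self n)
    simpa [norm_mul, norm_pow, Complex.norm_real, abs_of_pos hs0] using this
  have hgeom : Summable (fun n : ℕ => C * (r / s) ^ n) :=
    (summable_geometric_of_lt_one (by positivity) (by rw [div_lt_one hs0]; exact hrs)).mul_left C
  refine Summable.of_nonneg_of_le (fun n => by positivity) (fun n => ?_) hgeom
  have key : ‖a n‖ * r ^ n = (‖a n‖ * s ^ n) * (r / s) ^ n := by
    have e : s * (r / s) = r := by rw [mul_comm]; exact div_mul_cancel₀ r hs0.ne'
    rw [mul_assoc, ← mul_pow, e]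
  rw [key]
  exact mul_le_mul_of_nonneg_right (hC' n) (by positivity)

set_option maxHeartbeats 1000000 in
private lemma schur_pick {G : ℂ → ℂ} {b : ℕ → ℂ}
    (hG : ∀ z ∈ ball (0:ℂ) 1, HasSum (fun n => b n * z ^ n) (G z))
    (hbd : ∀ z ∈ ball (0:ℂ) 1, ‖G z‖ ≤ 1) :
    ‖b 1‖ ≤ 1 - ‖b 0‖ ^ 2 := by
  -- G 0 = b 0
  have hG0 : G 0 = b 0 := by
    have h0 : HasSum (fun n => b n * (0:ℂ) ^ n) (G 0) := hG 0 (by simp)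
    have h0' : HasSum (fun n => b n * (0:ℂ) ^ n) (b 0 * (0:ℂ) ^ 0) :=
      hasSum_single 0 (fun m hm => by simp [zero_pow hm])
    simpa using h0.unique h0'
  -- power series
  set p : FormalMultilinearSeries ℂ ℂ ℂ := FormalMultilinearSeries.ofScalars ℂ b with hp
  have hcoeff : ∀ m, p.coeff m = b m := by
    intro m
    simp [hp, FormalMultilinearSeries.coeff, FormalMultilinearSeries.ofScalars,
      List.prod_ofFn]
  have hrad : 1 ≤ p.radius := by
    apply ENNReal.le_of_forall_nnreal_lt
    intro r hr
    apply p.le_radius_of_summable_norm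
    have hr1 : (r : ℝ) < 1 := by exact_mod_cast hr
    have hsum := summable_aux (fun z hz => (hG z hz).summable) r.coe_nonneg hr1
    refine Summable.of_nonneg_of_le (fun n => by positivity) (fun n => ?_) hsum
    have : ‖p n‖ = ‖b n‖ := by
      rw [FormalMultilinearSeries.norm_apply_eq_norm_coef, hcoeff n]
    rw [this]
  have hball : eball (0:ℂ) 1 = ball (0:ℂ) 1 := by
    ext y
    rw [Metric.mem_eball, edist_dist, mem_ball, ← ENNReal.ofReal_one,
      ENNReal.ofReal_lt_ofReal_iff one_pos]
  have hfp : HasFPowerSeriesOnBall G p 0 1 := by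
    refine ⟨hrad, one_pos, fun {y} hy => ?_⟩
    have hy' : y ∈ ball (0:ℂ) 1 := by rw [← hball]; exact hy
    simp only [hp, FormalMultilinearSeries.ofScalars_apply_eq, smul_eq_mul, zero_add]
    exact hG y hy'
  have hdiff : DifferentiableOn ℂ G (ball 0 1) := by
    have := hfp.analyticOnNhd
    rw [hball] at this
    exact this.differentiableOn
  have hderiv : deriv G 0 = b 1 := by
    rw [hfp.hasFPowerSeriesAt.deriv]
    have := hcoeff 1
    rw [FormalMultilinearSeries.coeff] at this
    exact this
  have hb0le : ‖b 0‖ ≤ 1 := by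
    rw [← hG0]
    exact hbd 0 (by simp)
  rcases eq_or_lt_of_le hb0le with heq | hlt
  · -- |b 0| = 1 : G is constant by max modulus
    have hmax : IsMaxOn (norm ∘ G) (ball 0 1) 0 := by
      intro z hz
      simp only [Function.comp_apply, Set.mem_setOf_eq, hG0]
      rw [heq]
      exact hbd z hz
    have heqOn := Complex.eqOn_of_isPreconnected_of_isMaxOn_norm
      (convex_ball (0:ℂ) 1).isPreconnected isOpen_ball hdiff (mem_ball_self one_pos) hmax
    have hev : G =ᶠ[nhds 0] fun _ => G 0 :=
      Filter.eventuallyEq_of_mem (isOpen_ball.mem_nhds (mem_ball_self one_pos))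
        (fun z hz => heqOn hz)
    have : deriv G 0 = 0 := by
      rw [hev.deriv_eq]
      exact deriv_const _ _
    rw [hderiv] at this
    rw [this, norm_zero, heq]
    norm_num
  · -- |b 0| < 1 : Möbius + Schwarz
    set c : ℂ := b 0 with hc
    set v : ℂ → ℂ := fun z => 1 - (starRingEnd ℂ) c * G z with hv
    have hvne : ∀ z ∈ ball (0:ℂ) 1, v z ≠ 0 := by
      intro z hz h
      rw [hv] at h
      have h1 : (1:ℂ) = (starRingEnd ℂ) c * G z := by
        have := sub_eq_zero.mp h
        exact this
      have : (1:ℝ) ≤ ‖c‖ := by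
        calc (1:ℝ) = ‖(starRingEnd ℂ) c * G z‖ := by rw [← h1]; simp
          _ = ‖c‖ * ‖G z‖ := by rw [norm_mul]; simp
          _ ≤ ‖c‖ * 1 := by gcongr; exact hbd z hz
          _ = ‖c‖ := mul_one _
      linarith
    set H : ℂ → ℂ := fun z => (G z - c) / v z with hH
    -- key pointwise inequality
    have hineq : ∀ w : ℂ, ‖w‖ ≤ 1 → ‖w - c‖ ≤ ‖1 - (starRingEnd ℂ) c * w‖ := by
      intro w hw
      have hnsq : ∀ x : ℂ, ‖x‖ ^ 2 = Complex.normSq x := by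
        intro x
        rw [Complex.sq_norm]
      have hid : Complex.normSq (1 - (starRingEnd ℂ) c * w) - Complex.normSq (w - c)
          = (1 - Complex.normSq c) * (1 - Complex.normSq w) := by
        simp only [Complex.normSq_apply, Complex.sub_re, Complex.sub_im, Complex.mul_re,
          Complex.mul_im, Complex.one_re, Complex.one_im, Complex.conj_re, Complex.conj_im]
        ring
      have hc1 : Complex.normSq c ≤ 1 := by rw [← hnsq]; nlinarith [hb0le, norm_nonneg c]
      have hw1 : Complex.normSq w ≤ 1 := by rw [← hnsq]; nlinarith [norm_nonneg w]
      have h2 : ‖w - c‖ ^ 2 ≤ ‖1 - (starRingEnd ℂ) c * w‖ ^ 2 := by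
        rw [hnsq, hnsq]
        nlinarith [hid]
      nlinarith [norm_nonneg (w - c), norm_nonneg (1 - (starRingEnd ℂ) c * w)]
    have hHd : DifferentiableOn ℂ H (ball 0 1) := by
      apply DifferentiableOn.div
      · exact hdiff.sub (differentiableOn_const c)
      · exact (differentiableOn_const 1).sub ((differentiableOn_const _).mul hdiff)
      · exact hvne
    have hH0 : H 0 = 0 := by
      rw [hH]
      simp [hG0]
    have hHbd : ∀ z ∈ ball (0:ℂ) 1, ‖H z‖ ≤ 1 := by
      intro z hz
      rw [hH]
      simp only [norm_div]
      apply div_le_one_of_le₀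
      · exact hineq (G z) (hbd z hz)
      · exact norm_nonneg _
    have hds : ‖deriv H 0‖ ≤ 1 := by
      refine le_of_forall_pos_le_add (fun ε hε => ?_)
      have hmaps : Set.MapsTo H (ball 0 1) (ball (H 0) (1 + ε)) := by
        intro z hz
        rw [hH0, mem_ball_zero_iff]
        exact lt_of_le_of_lt (hHbd z hz) (by linarith)
      have := Complex.norm_deriv_le_div_of_mapsTo_ball hHd (hmaps.mono_right ball_subset_closedBall) one_pos
      simpa using this
    -- compute deriv H 0
    have hGd : HasDerivAt G (b 1) 0 := by
      have h := hfp.hasFPowerSeriesAt.hasDerivAt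
      have h2 : (p 1 fun _ => 1) = b 1 := hcoeff 1
      rwa [h2] at h
    have hv0 : v 0 = 1 - (starRingEnd ℂ) c * c := by rw [hv]; simp [hG0]
    have hv0ne : v 0 ≠ 0 := hvne 0 (by simp)
    have hu : HasDerivAt (fun z => G z - c) (b 1) 0 := hGd.sub_const c
    have hvd : HasDerivAt v (-((starRingEnd ℂ) c * b 1)) 0 := by
      rw [hv]
      simpa using (hGd.const_mul ((starRingEnd ℂ) c)).const_sub 1
    have hHdriv : HasDerivAt H ((b 1 * v 0 - (G 0 - c) * (-((starRingEnd ℂ) c * b 1))) / v 0 ^ 2) 0 :=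
      hu.div hvd hv0ne
    have hG0c : G 0 - c = 0 := by rw [hG0, sub_self]
    have hderivH : deriv H 0 = b 1 / v 0 := by
      rw [hHdriv.deriv, hG0c]
      field_simp
      ring
    have hnormsq : Complex.normSq c = ‖c‖ ^ 2 := by
      rw [Complex.normSq_eq_norm_sq]
    have hnv0 : ‖v 0‖ = 1 - ‖c‖ ^ 2 := by
      rw [hv0]
      have h1 : (starRingEnd ℂ) c * c = (Complex.normSq c : ℂ) := by
        rw [mul_comm, Complex.mul_conj]
      have h2 : (1 : ℂ) - (Complex.normSq c : ℂ) = ((1 - ‖c‖ ^ 2 : ℝ) : ℂ) := by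
        rw [hnormsq]; push_cast; ring
      have h3 : (0:ℝ) ≤ 1 - ‖c‖ ^ 2 := by nlinarith [hlt, norm_nonneg c]
      rw [h1, h2, Complex.norm_real, Real.norm_eq_abs, _root_.abs_of_nonneg h3]
    have := hds
    rw [hderivH, norm_div, hnv0] at this
    have hpos : 0 < 1 - ‖c‖ ^ 2 := by nlinarith [hlt, norm_nonneg c]
    calc ‖b 1‖ = ‖b 1‖ / (1 - ‖c‖ ^ 2) * (1 - ‖c‖ ^ 2) := (div_mul_cancel₀ _ hpos.ne').symm
      _ ≤ 1 * (1 - ‖c‖ ^ 2) := by gcongr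
      _ = 1 - ‖b 0‖ ^ 2 := by rw [one_mul, hc]

set_option maxHeartbeats 1000000 in
theorem schur_wiener_coeff (f : ℂ → ℂ) (a : ℕ → ℂ)
    (ha : ∀ z ∈ ball (0:ℂ) 1, HasSum (fun n => a n * z ^ n) (f z))
    (hbd : ∀ z ∈ ball (0:ℂ) 1, ‖f z‖ ≤ 1) :
    ∀ n, 1 ≤ n → ‖a n‖ ≤ 1 - ‖a 0‖ ^ 2 := by
  intro n hn
  have hn0 : n ≠ 0 := Nat.one_le_iff_ne_zero.mp hn
  have hnpos : 0 < n := hn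
  set ζ : ℂ := Complex.exp (2 * Real.pi * Complex.I / n) with hζdef
  have hζ : IsPrimitiveRoot ζ n := Complex.isPrimitiveRoot_exp n hn0
  have hζnorm : ‖ζ‖ = 1 := by
    have h1 : ‖ζ‖ ^ n = 1 := by rw [← norm_pow, hζ.pow_eq_one, norm_one]
    rcases lt_trichotomy ‖ζ‖ 1 with h | h | h
    · exfalso
      have := pow_lt_one₀ (norm_nonneg ζ) h hn0
      rw [h1] at this
      exact lt_irrefl 1 this
    · exact h
    · exfalso
      have := one_lt_pow₀ h hn0
      rw [h1] at this
      exact lt_irrefl 1 this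
  have hmem : ∀ (j : ℕ) (z : ℂ), z ∈ ball (0:ℂ) 1 → ζ ^ j * z ∈ ball (0:ℂ) 1 := by
    intro j z hz
    rw [mem_ball_zero_iff] at *
    rw [norm_mul, norm_pow, hζnorm, one_pow, one_mul]
    exact hz
  -- key identity
  have hkey : ∀ z ∈ ball (0:ℂ) 1, HasSum (fun k => a (k * n) * (z ^ n) ^ k)
      ((n:ℂ)⁻¹ * ∑ j ∈ Finset.range n, f (ζ ^ j * z)) := by
    intro z hz
    have h1 : HasSum (fun m => ∑ j ∈ Finset.range n, a m * (ζ ^ j * z) ^ m)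
        (∑ j ∈ Finset.range n, f (ζ ^ j * z)) :=
      hasSum_sum (fun j _ => ha _ (hmem j z hz))
    have hroot : ∀ m : ℕ, ∑ j ∈ Finset.range n, (ζ ^ m) ^ j = if n ∣ m then (n:ℂ) else 0 := by
      intro m
      by_cases hd : n ∣ m
      · have : ζ ^ m = 1 := (hζ.pow_eq_one_iff_dvd m).2 hd
        simp [this, hd]
      · have hne : ζ ^ m ≠ 1 := fun h => hd ((hζ.pow_eq_one_iff_dvd m).1 h)
        rw [geom_sum_eq hne]
        have : (ζ ^ m) ^ n = 1 := by
          rw [← pow_mul, mul_comm, pow_mul, hζ.pow_eq_one, one_pow]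
        simp [this, hd]
    have h2 : ∀ m : ℕ, ∑ j ∈ Finset.range n, a m * (ζ ^ j * z) ^ m
        = (if n ∣ m then (n:ℂ) else 0) * (a m * z ^ m) := by
      intro m
      have : ∀ j : ℕ, a m * (ζ ^ j * z) ^ m = (ζ ^ m) ^ j * (a m * z ^ m) := by
        intro j
        rw [mul_pow, ← pow_mul, ← pow_mul, mul_comm j m]
        ring
      rw [Finset.sum_congr rfl (fun j _ => this j), ← Finset.sum_mul, hroot]
    have h3 : HasSum (fun m => (if n ∣ m then (n:ℂ) else 0) * (a m * z ^ m))
        (∑ j ∈ Finset.range n, f (ζ ^ j * z)) := by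
      have := h1
      rw [funext h2] at this
      exact this
    have hinj : Function.Injective (fun k : ℕ => k * n) := fun x y h =>
      Nat.eq_of_mul_eq_mul_right hnpos h
    have hside : ∀ m ∉ Set.range (fun k : ℕ => k * n),
        (if n ∣ m then (n:ℂ) else 0) * (a m * z ^ m) = 0 := by
      intro m hm
      have : ¬ n ∣ m := by
        intro ⟨k, hk⟩
        exact hm ⟨k, by rw [hk]; ring⟩
      rw [if_neg this, zero_mul]
    have h4 := (hinj.hasSum_iff hside).2 h3
    have h5 : HasSum (fun k => (n:ℂ) * (a (k * n) * (z ^ n) ^ k))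
        (∑ j ∈ Finset.range n, f (ζ ^ j * z)) := by
      have heq : ∀ k : ℕ, ((fun m => (if n ∣ m then (n:ℂ) else 0) * (a m * z ^ m)) ∘
          (fun k : ℕ => k * n)) k = (n:ℂ) * (a (k * n) * (z ^ n) ^ k) := by
        intro k
        simp only [Function.comp_apply]
        rw [if_pos (dvd_mul_left n k), ← pow_mul, mul_comm n k]
      rw [← funext heq]
      exact h4
    have hne : (n:ℂ) ≠ 0 := Nat.cast_ne_zero.mpr hn0
    have h6 := h5.mul_left (n:ℂ)⁻¹
    have heq2 : ∀ k : ℕ, (n:ℂ)⁻¹ * ((n:ℂ) * (a (k * n) * (z ^ n) ^ k))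
        = a (k * n) * (z ^ n) ^ k := by
      intro k
      rw [← mul_assoc, inv_mul_cancel₀ hne, one_mul]
    rw [funext heq2] at h6
    exact h6
  set F : ℂ → ℂ := fun w => (n:ℂ)⁻¹ * ∑ j ∈ Finset.range n, f (ζ ^ j * w ^ ((n:ℂ)⁻¹)) with hF
  have hroot_mem : ∀ w : ℂ, w ∈ ball (0:ℂ) 1 → (w ^ ((n:ℂ)⁻¹)) ∈ ball (0:ℂ) 1 ∧
      (w ^ ((n:ℂ)⁻¹)) ^ n = w := by
    intro w hw
    have hzn : (w ^ ((n:ℂ)⁻¹)) ^ n = w := Complex.cpow_nat_inv_pow w hn0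
    constructor
    · rw [mem_ball_zero_iff] at *
      by_contra h
      push_neg at h
      have : (1:ℝ) ≤ ‖(w ^ ((n:ℂ)⁻¹)) ^ n‖ := by
        rw [norm_pow]
        exact one_le_pow₀ h
      rw [hzn] at this
      linarith
    · exact hzn
  have hFsum : ∀ w ∈ ball (0:ℂ) 1, HasSum (fun k => a (k * n) * w ^ k) (F w) := by
    intro w hw
    obtain ⟨hz1, hz2⟩ := hroot_mem w hw
    have := hkey _ hz1
    rw [hz2] at this
    exact this
  have hFbd : ∀ w ∈ ball (0:ℂ) 1, ‖F w‖ ≤ 1 := by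
    intro w hw
    obtain ⟨hz1, _⟩ := hroot_mem w hw
    rw [hF]
    calc ‖(n:ℂ)⁻¹ * ∑ j ∈ Finset.range n, f (ζ ^ j * w ^ ((n:ℂ)⁻¹))‖
        = ‖(n:ℂ)⁻¹‖ * ‖∑ j ∈ Finset.range n, f (ζ ^ j * w ^ ((n:ℂ)⁻¹))‖ := norm_mul _ _
      _ ≤ ‖(n:ℂ)⁻¹‖ * ∑ j ∈ Finset.range n, ‖f (ζ ^ j * w ^ ((n:ℂ)⁻¹))‖ := by
          gcongr
          exact norm_sum_le _ _
      _ ≤ ‖(n:ℂ)⁻¹‖ * ∑ j ∈ Finset.range n, (1:ℝ) := by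
          gcongr with j hj
          exact hbd _ (hmem j _ hz1)
      _ = 1 := by
          rw [Finset.sum_const, Finset.card_range, norm_inv, Complex.norm_natCast]
          simp
          rw [inv_mul_cancel₀ (Nat.cast_ne_zero.mpr hn0)]
  have := schur_pick hFsum hFbd
  simpa using this
end

section
/- Let f : 𝔻 → ℂ be analytic with |f(z)| ≤ 1 on 𝔻 and f(z) = Σ a_n z^n. Then Σ_{n=0}^∞ |a_n| r^n ≤ 1 for all 0 ≤ r ≤ 1/3. -/
open Metric

section BohrAux

open Complex Filter

theorem myHasFPower (b : ℕ → ℂ) (g : ℂ → ℂ)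
    (hb : ∀ z ∈ ball (0:ℂ) 1, HasSum (fun n => b n * z ^ n) (g z)) :
    HasFPowerSeriesOnBall g (FormalMultilinearSeries.ofScalars ℂ b) 0 1 := by
  refine ⟨?_, zero_lt_one, ?_⟩
  · apply ENNReal.le_of_forall_nnreal_lt
    intro r hr
    have hr1 : (r : ℝ) < 1 := by exact_mod_cast hr
    have hz : ((r : ℝ) : ℂ) ∈ ball (0:ℂ) 1 := by
      simp [Complex.norm_of_nonneg r.coe_nonneg, hr1]
    have hs := (hb _ hz).summable
    apply FormalMultilinearSeries.le_radius_of_tendsto (l := 0)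
    have h0 := hs.tendsto_atTop_zero.norm
    simp only [norm_zero] at h0
    convert h0 using 2 with n
    rw [FormalMultilinearSeries.ofScalars_norm, norm_mul, norm_pow]
    simp [Complex.norm_of_nonneg r.coe_nonneg]
  · intro y hy
    have hy' : y ∈ ball (0:ℂ) 1 := by
      rw [mem_ball, dist_zero_right, ← ENNReal.ofReal_lt_one, ofReal_norm]; simpa using hy
    have := hb y hy'
    simp only [FormalMultilinearSeries.ofScalars_apply_eq, smul_eq_mul, zero_add]
    exact this.congr_fun (fun n => by ring)

theorem val_at_zero (b : ℕ → ℂ) (g : ℂ → ℂ)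
    (hb : ∀ z ∈ ball (0:ℂ) 1, HasSum (fun n => b n * z ^ n) (g z)) : g 0 = b 0 := by
  have h := hb 0 (by simp)
  have h2 : HasSum (fun n => b n * (0:ℂ) ^ n) (b 0 * (0:ℂ) ^ 0) :=
    hasSum_single 0 (fun m hm => by simp [pow_eq_zero_iff hm])
  simpa using h.unique h2

theorem schwarz_pick_coeff (b : ℕ → ℂ) (g : ℂ → ℂ)
    (hb : ∀ z ∈ ball (0:ℂ) 1, HasSum (fun n => b n * z ^ n) (g z))
    (hbd : ∀ z ∈ ball (0:ℂ) 1, ‖g z‖ ≤ 1) :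
    ‖b 1‖ ≤ 1 - ‖b 0‖ ^ 2 := by
  have hp := myHasFPower b g hb
  have hg0 : g 0 = b 0 := val_at_zero b g hb
  have hb0 : ‖b 0‖ ≤ 1 := hg0 ▸ hbd 0 (by simp)
  have hball : Metric.eball (0:ℂ) 1 = ball (0:ℂ) 1 := by
    rw [show (1 : ENNReal) = ENNReal.ofReal (1:ℝ) by simp, Metric.emetric_ball]
  have hd : DifferentiableOn ℂ g (ball (0:ℂ) 1) := by
    have := hp.differentiableOn
    rwa [hball] at this
  have hns : ∀ z : ℂ, normSq z = ‖z‖ ^ 2 := fun z => by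
    rw [← Complex.sq_norm]
  have hcoeff : (FormalMultilinearSeries.ofScalars ℂ b).coeff 1 = b 1 := by
    simp [FormalMultilinearSeries.coeff, FormalMultilinearSeries.ofScalars]
  have hgd : HasDerivAt g (b 1) 0 := by
    have := hp.hasFPowerSeriesAt.hasDerivAt
    rw [show ((FormalMultilinearSeries.ofScalars ℂ b) 1 fun _ => 1)
      = (FormalMultilinearSeries.ofScalars ℂ b).coeff 1 from rfl, hcoeff] at this
    exact this
  by_cases hmax : ∃ z ∈ ball (0:ℂ) 1, 1 ≤ ‖g z‖
  · obtain ⟨z₀, hz₀, hz₀1⟩ := hmax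
    have hism : IsMaxOn (norm ∘ g) (ball (0:ℂ) 1) z₀ :=
      fun z hz => le_trans (hbd z hz) hz₀1
    have heq : Set.EqOn g (Function.const ℂ (g z₀)) (ball (0:ℂ) 1) :=
      Complex.eqOn_of_isPreconnected_of_isMaxOn_norm
        (convex_ball _ _).isPreconnected isOpen_ball hd hz₀ hism
    have hev : g =ᶠ[nhds (0:ℂ)] Function.const ℂ (g z₀) :=
      Filter.eventuallyEq_of_mem (isOpen_ball.mem_nhds (mem_ball_self one_pos)) heq
    have : deriv g 0 = 0 := by rw [hev.deriv_eq]; exact deriv_const _ _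
    rw [hgd.deriv] at this
    rw [this, norm_zero]
    nlinarith [norm_nonneg (b 0)]
  · push_neg at hmax
    set c : ℂ := b 0 with hc
    have hclt : ‖c‖ < 1 := by rw [← hg0]; exact hmax 0 (by simp)
    have hkey : ∀ w : ℂ, normSq (1 - (starRingEnd ℂ) c * w) - normSq (w - c)
        = (1 - normSq c) * (1 - normSq w) := by
      intro w
      simp only [normSq_apply, Complex.sub_re, Complex.sub_im, Complex.mul_re, Complex.mul_im,
        Complex.one_re, Complex.one_im, Complex.conj_re, Complex.conj_im]
      ring
    have hden : ∀ z ∈ ball (0:ℂ) 1, (1 : ℂ) - (starRingEnd ℂ) c * g z ≠ 0 := by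
      intro z hz h0
      have h1 : ‖(starRingEnd ℂ) c * g z‖ < 1 := by
        rw [norm_mul, RCLike.norm_conj]
        calc ‖c‖ * ‖g z‖ ≤ ‖c‖ * 1 := by
              exact mul_le_mul_of_nonneg_left (le_of_lt (hmax z hz)) (norm_nonneg c)
          _ < 1 := by simpa using hclt
      have : (1:ℂ) = (starRingEnd ℂ) c * g z := by linear_combination h0
      rw [← this] at h1; simp at h1
    set h : ℂ → ℂ := fun z => (g z - c) / (1 - (starRingEnd ℂ) c * g z) with hh
    have hdiffh : DifferentiableOn ℂ h (ball (0:ℂ) 1) := by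
      apply DifferentiableOn.div (hd.sub_const c)
      · exact (differentiableOn_const 1).sub ((differentiableOn_const _).mul hd)
      · exact hden
    have hh0 : h 0 = 0 := by simp [hh, hg0]
    have hmaps : Set.MapsTo h (ball (0:ℂ) 1) (ball (h 0) 1) := by
      intro z hz
      rw [hh0, mem_ball, dist_zero_right]
      have hgz := hmax z hz
      have hdz := hden z hz
      simp only [hh, norm_div]
      rw [div_lt_one (norm_pos_iff.mpr hdz)]
      have hsq : normSq (g z - c) < normSq (1 - (starRingEnd ℂ) c * g z) := by
        have h1 : 0 < 1 - normSq c := by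
          rw [hns]; nlinarith [norm_nonneg c]
        have h2 : 0 < 1 - normSq (g z) := by
          rw [hns]; nlinarith [norm_nonneg (g z)]
        nlinarith [hkey (g z)]
      have := Real.sqrt_lt_sqrt (normSq_nonneg _) hsq
      simpa [Complex.norm_def] using this
    have hS := Complex.norm_deriv_le_div_of_mapsTo_ball hdiffh (hmaps.mono_right ball_subset_closedBall) one_pos
    -- compute deriv h 0
    have hnum : HasDerivAt (fun z => g z - c) (b 1) 0 := hgd.sub_const c
    have hden' : HasDerivAt (fun z => (1:ℂ) - (starRingEnd ℂ) c * g z)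
        (-((starRingEnd ℂ) c * b 1)) 0 := ((hgd.const_mul ((starRingEnd ℂ) c)).const_sub 1)
    have hd0 : (1:ℂ) - (starRingEnd ℂ) c * g 0 ≠ 0 := hden 0 (by simp)
    have hdiv := hnum.div hden' hd0
    have hd0c : (1:ℂ) - (starRingEnd ℂ) c * c ≠ 0 := by rwa [hg0] at hd0
    have hval : (b 1 * (1 - (starRingEnd ℂ) c * g 0) - (g 0 - c) * -((starRingEnd ℂ) c * b 1)) /
        (1 - (starRingEnd ℂ) c * g 0) ^ 2 = b 1 / (1 - (starRingEnd ℂ) c * c) := by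
      rw [hg0]
      field_simp
      ring
    rw [hval] at hdiv
    have hdd : (1:ℂ) - (starRingEnd ℂ) c * c = ((1 - normSq c : ℝ) : ℂ) := by
      rw [← Complex.normSq_eq_conj_mul_self]
      push_cast
      ring
    have hnormd : ‖deriv h 0‖ = ‖b 1‖ / (1 - normSq c) := by
      rw [show deriv h 0 = _ from hdiv.deriv, norm_div, hdd]
      congr 1
      rw [Complex.norm_real, Real.norm_of_nonneg]
      rw [hns]; nlinarith [norm_nonneg c]
    rw [hnormd] at hS
    have h1 : 0 < 1 - normSq c := by
      rw [hns]; nlinarith [norm_nonneg c]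
    rw [div_le_div_iff₀ h1 one_pos] at hS
    rw [hns] at hS
    linarith

theorem wiener_bound (f : ℂ → ℂ) (a : ℕ → ℂ)
    (ha : ∀ z ∈ ball (0:ℂ) 1, HasSum (fun n => a n * z ^ n) (f z))
    (hbd : ∀ z ∈ ball (0:ℂ) 1, ‖f z‖ ≤ 1) (n : ℕ) (hn : 1 ≤ n) :
    ‖a n‖ ≤ 1 - ‖a 0‖ ^ 2 := by
  have hn0 : n ≠ 0 := by omega
  set ζ : ℂ := Complex.exp (2 * Real.pi * I / n) with hζdef
  have hζ : IsPrimitiveRoot ζ n := by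
    have := Complex.isPrimitiveRoot_exp n hn0
    convert this using 2
  have hζnorm : ‖ζ‖ = 1 := hζ.norm'_eq_one hn0
  have key : ∀ w ∈ ball (0:ℂ) 1, ∃ s : ℂ,
      HasSum (fun m => a (n * m) * w ^ m) s ∧ ‖s‖ ≤ 1 := by
    intro w hw
    obtain ⟨z, hz⟩ : ∃ z : ℂ, z ^ n = w := ⟨w ^ ((n : ℂ))⁻¹, Complex.cpow_nat_inv_pow w hn0⟩
    have hwlt : ‖w‖ < 1 := by simpa [mem_ball, dist_zero_right] using hw
    have hzlt : ‖z‖ < 1 := by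
      by_contra hge
      push_neg at hge
      have : (1:ℝ) ≤ ‖z‖ ^ n := one_le_pow₀ hge
      rw [← norm_pow, hz] at this
      linarith
    have hks : ∀ k ∈ Finset.range n, HasSum (fun m => a m * (ζ ^ k * z) ^ m) (f (ζ ^ k * z)) := by
      intro k _
      apply ha
      simp only [mem_ball, dist_zero_right, norm_mul, norm_pow, hζnorm, one_pow, one_mul]
      exact hzlt
    have hsum := hasSum_sum hks
    set s : ℂ := (n : ℂ)⁻¹ * ∑ k ∈ Finset.range n, f (ζ ^ k * z) with hsdef
    have hterm : ∀ m, ((n : ℂ))⁻¹ * ∑ k ∈ Finset.range n, a m * (ζ ^ k * z) ^ m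
        = if n ∣ m then a m * z ^ m else 0 := by
      intro m
      have hrw : ∀ k, a m * (ζ ^ k * z) ^ m = a m * z ^ m * (ζ ^ m) ^ k := by
        intro k
        rw [mul_pow, ← pow_mul, ← pow_mul, mul_comm k m]
        ring
      rw [Finset.sum_congr rfl (fun k _ => hrw k), ← Finset.mul_sum]
      by_cases hdvd : n ∣ m
      · rw [if_pos hdvd, (hζ.pow_eq_one_iff_dvd m).mpr hdvd]
        simp only [one_pow, Finset.sum_const, Finset.card_range, nsmul_eq_mul, mul_one]
        have hnC : (n:ℂ) ≠ 0 := Nat.cast_ne_zero.mpr hn0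
        field_simp
      · rw [if_neg hdvd]
        have hne : ζ ^ m ≠ 1 := fun h => hdvd ((hζ.pow_eq_one_iff_dvd m).mp h)
        rw [geom_sum_eq hne, ← pow_mul, mul_comm m n, pow_mul, hζ.pow_eq_one]
        simp
    have hsum2 : HasSum (fun m => if n ∣ m then a m * z ^ m else 0) s :=
      (hsum.mul_left ((n : ℂ))⁻¹).congr_fun (fun m => (hterm m).symm)
    have hinj : Function.Injective (fun m : ℕ => n * m) :=
      fun x y h => by simpa [Nat.mul_left_cancel_iff (by omega : 0 < n)] using h
    have hzero : ∀ x ∉ Set.range (fun m : ℕ => n * m),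
        (if n ∣ x then a x * z ^ x else 0) = 0 := by
      intro x hx
      rw [if_neg]
      intro ⟨c, hc⟩
      exact hx ⟨c, hc.symm⟩
    have hsum3 : HasSum (fun m => a (n * m) * w ^ m) s := by
      refine ((Function.Injective.hasSum_iff hinj hzero).mpr hsum2).congr_fun fun m => ?_
      simp only [Function.comp_apply]
      rw [if_pos ⟨m, rfl⟩, pow_mul, hz]
    refine ⟨s, hsum3, ?_⟩
    rw [hsdef, norm_mul]
    have h1 : ‖∑ k ∈ Finset.range n, f (ζ ^ k * z)‖ ≤ (n : ℝ) := by
      calc ‖∑ k ∈ Finset.range n, f (ζ ^ k * z)‖ ≤ ∑ k ∈ Finset.range n, ‖f (ζ ^ k * z)‖ :=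
            norm_sum_le _ _
        _ ≤ ∑ k ∈ Finset.range n, 1 := by
            apply Finset.sum_le_sum
            intro k _
            apply hbd
            simp only [mem_ball, dist_zero_right, norm_mul, norm_pow, hζnorm, one_pow, one_mul]
            exact hzlt
        _ = n := by simp
    have h2 : ‖((n:ℂ))⁻¹‖ = (n : ℝ)⁻¹ := by
      rw [norm_inv]; congr 1; simp
    rw [h2]
    calc (n:ℝ)⁻¹ * ‖∑ k ∈ Finset.range n, f (ζ ^ k * z)‖ ≤ (n:ℝ)⁻¹ * n := by
          apply mul_le_mul_of_nonneg_left h1 (by positivity)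
      _ = 1 := by field_simp
  set g : ℂ → ℂ := fun w => ∑' m, a (n * m) * w ^ m with hgdef
  have hbg : ∀ w ∈ ball (0:ℂ) 1, HasSum (fun m => a (n * m) * w ^ m) (g w) := by
    intro w hw
    obtain ⟨s, hs, _⟩ := key w hw
    rwa [show g w = s from hs.tsum_eq]
  have hbdg : ∀ w ∈ ball (0:ℂ) 1, ‖g w‖ ≤ 1 := by
    intro w hw
    obtain ⟨s, hs, h1⟩ := key w hw
    rw [show g w = s from hs.tsum_eq]
    exact h1
  have := schwarz_pick_coeff (fun m => a (n * m)) g hbg hbdg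
  simpa using this

end BohrAux

theorem bohr_theorem (f : ℂ → ℂ) (a : ℕ → ℂ)
    (ha : ∀ z ∈ ball (0:ℂ) 1, HasSum (fun n => a n * z ^ n) (f z))
    (hbd : ∀ z ∈ ball (0:ℂ) 1, ‖f z‖ ≤ 1) :
    ∀ r : ℝ, 0 ≤ r → r ≤ 1/3 → majorant a r ≤ 1 := by
  intro r hr0 hr13
  set x : ℝ := ‖a 0‖ with hx
  have hx0 : 0 ≤ x := norm_nonneg _
  have hx1 : x ≤ 1 := by
    rw [hx, ← val_at_zero a f ha]
    exact hbd 0 (mem_ball_self one_pos)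
  have hcoef : ∀ m : ℕ, ‖a (m + 1)‖ ≤ 1 - x ^ 2 :=
    fun m => wiener_bound f a ha hbd (m + 1) (by omega)
  have hq3 : ENNReal.ofReal r ≤ (3 : ENNReal)⁻¹ := by
    calc ENNReal.ofReal r ≤ ENNReal.ofReal (1/3) := ENNReal.ofReal_le_ofReal hr13
      _ = (3 : ENNReal)⁻¹ := by
          rw [show (1/3 : ℝ) = (3:ℝ)⁻¹ by norm_num,
            ENNReal.ofReal_inv_of_pos (by norm_num), ENNReal.ofReal_ofNat]
  rw [majorant, tsum_eq_zero_add' ENNReal.summable]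
  have hterm0 : (‖a 0‖₊ : ENNReal) * (ENNReal.ofReal r) ^ 0 = ENNReal.ofReal x := by
    rw [pow_zero, mul_one, ← enorm_eq_nnnorm, ← ofReal_norm]
  have htail : ∑' m : ℕ, (‖a (m + 1)‖₊ : ENNReal) * (ENNReal.ofReal r) ^ (m + 1)
      ≤ ENNReal.ofReal ((1 - x ^ 2) / 2) := by
    have hstep : ∀ m : ℕ, (‖a (m + 1)‖₊ : ENNReal) * (ENNReal.ofReal r) ^ (m + 1)
        ≤ ENNReal.ofReal (1 - x ^ 2) * ((3 : ENNReal)⁻¹) ^ (m + 1) := by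
      intro m
      apply mul_le_mul'
      · rw [← enorm_eq_nnnorm, ← ofReal_norm]
        exact ENNReal.ofReal_le_ofReal (hcoef m)
      · exact pow_le_pow_left' hq3 (m + 1)
    calc ∑' m : ℕ, (‖a (m + 1)‖₊ : ENNReal) * (ENNReal.ofReal r) ^ (m + 1)
        ≤ ∑' m : ℕ, ENNReal.ofReal (1 - x ^ 2) * ((3 : ENNReal)⁻¹) ^ (m + 1) :=
          ENNReal.tsum_le_tsum hstep
      _ = ENNReal.ofReal (1 - x ^ 2) * ((3 : ENNReal)⁻¹ * (1 - (3 : ENNReal)⁻¹)⁻¹) := by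
          rw [ENNReal.tsum_mul_left, ENNReal.tsum_geometric_add_one]
      _ = ENNReal.ofReal (1 - x ^ 2) * (2 : ENNReal)⁻¹ := by
          congr 1
          have h3 : (3 : ENNReal) * 3⁻¹ = 1 :=
            ENNReal.mul_inv_cancel (by norm_num) (by norm_num)
          have h23 : (1 : ENNReal) - (3 : ENNReal)⁻¹ = 2 * (3 : ENNReal)⁻¹ := by
            apply ENNReal.sub_eq_of_eq_add (by simp)
            rw [show (2 : ENNReal) * 3⁻¹ + 3⁻¹ = 3 * 3⁻¹ by ring, h3]
          rw [h23, ENNReal.mul_inv (by norm_num) (by norm_num), inv_inv,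
            mul_comm ((2:ENNReal))⁻¹ 3, ← mul_assoc,
            ENNReal.inv_mul_cancel (by norm_num) (by norm_num), one_mul]
      _ = ENNReal.ofReal ((1 - x ^ 2) / 2) := by
          rw [ENNReal.ofReal_div_of_pos (by norm_num), ENNReal.ofReal_ofNat]
          rw [div_eq_mul_inv]
  rw [hterm0]
  calc ENNReal.ofReal x + ∑' m : ℕ, (‖a (m + 1)‖₊ : ENNReal) * (ENNReal.ofReal r) ^ (m + 1)
      ≤ ENNReal.ofReal x + ENNReal.ofReal ((1 - x ^ 2) / 2) := by
        exact add_le_add_right htail _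
    _ = ENNReal.ofReal (x + (1 - x ^ 2) / 2) := by
        rw [ENNReal.ofReal_add hx0 (by nlinarith)]
    _ ≤ 1 := by
        rw [ENNReal.ofReal_le_one]
        nlinarith
end

section
/- Let g be analytic on 𝔻 satisfying z·g'(z) = q(z)·g(z) with g(z) = z + Σ_{n≥2} g_n z^n and q(z) = 1 + Σ_{n≥1} q_n z^n analytic with |q_n| ≤ 2 for all n ≥ 1. Then the coefficients satisfy the recursion (n−1)·g_n = Σ_{k=1}^{n−1} g_{n−k} q_k (with g_1 = 1) for all n ≥ 2, and consequently |g_n| ≤ n for all n ≥ 1. -/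
open Metric

open FormalMultilinearSeries Finset

lemma hasFPS_of_forall_hasSum {a : ℕ → ℂ} {F : ℂ → ℂ}
    (h : ∀ z ∈ ball (0:ℂ) 1, HasSum (fun n => a n * z ^ n) (F z)) :
    HasFPowerSeriesOnBall F (ofScalars ℂ a) 0 1 := by
  refine ⟨?_, zero_lt_one, ?_⟩
  · refine ENNReal.le_of_forall_nnreal_lt (fun r hr => ?_)
    have hr1 : (r : ℝ) < 1 := by exact_mod_cast hr
    have hz : ((r:ℝ) : ℂ) ∈ ball (0:ℂ) 1 := by
      simp only [mem_ball_zero_iff, Complex.norm_real, Real.norm_eq_abs,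
        abs_of_nonneg r.coe_nonneg]
      exact hr1
    have ht := (h _ hz).summable.tendsto_atTop_zero
    have ht2 : Filter.Tendsto (fun n => ‖ofScalars ℂ a n‖ * (r:ℝ) ^ n) Filter.atTop (nhds 0) := by
      rw [tendsto_zero_iff_norm_tendsto_zero] at ht
      convert ht using 2 with n
      rw [ofScalars_norm]
      simp [abs_of_nonneg r.coe_nonneg]
    exact (ofScalars ℂ a).le_radius_of_tendsto ht2
  · intro y hy
    have hy' : y ∈ ball (0:ℂ) 1 := by
      rw [EMetric.mem_ball, edist_zero_right] at hy
      rw [mem_ball_zero_iff]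
      exact_mod_cast (show (‖y‖₊ : ENNReal) < 1 from hy)
    simp only [zero_add, ofScalars_apply_eq, smul_eq_mul]
    exact h y hy'

lemma hasSum_zderiv {a : ℕ → ℂ} {F : ℂ → ℂ}
    (hp : HasFPowerSeriesOnBall F (ofScalars ℂ a) 0 1) {z : ℂ} (hz : z ∈ ball (0:ℂ) 1) :
    HasSum (fun n : ℕ => (n : ℂ) * a n * z ^ n) (z * deriv F z) := by
  have hz' : (‖z‖₊ : ENNReal) < 1 := by
    rw [mem_ball_zero_iff] at hz; exact_mod_cast hz
  have h1 := (hp.fderiv).hasSum (y := z) (by simpa [edist_zero_right] using (show ‖z‖ₑ < 1 from hz'))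
  have h2 := (ContinuousLinearMap.apply ℂ ℂ z).hasSum h1
  simp only [ContinuousLinearMap.apply_apply] at h2
  have h3 : ∀ n : ℕ, (ofScalars ℂ a).derivSeries n (fun _ => z) z
      = ((n:ℂ) + 1) * a (n + 1) * z ^ (n + 1) := by
    intro n
    rw [derivSeries_apply_diag, ofScalars_apply_eq]
    push_cast [nsmul_eq_mul, smul_eq_mul]
    ring
  have h4 : fderiv ℂ F (0 + z) z = z * deriv F z := by
    rw [zero_add, ← fderiv_apply_one_eq_deriv]
    have hms := (fderiv ℂ F z).map_smul z (1:ℂ)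
    simp only [smul_eq_mul, mul_one] at hms
    exact hms
  rw [h4] at h2
  simp only [h3] at h2
  apply (hasSum_nat_add_iff' (f := fun n : ℕ => (n : ℂ) * a n * z ^ n) 1).mp
  simpa using h2

lemma gauss_reflect (m : ℕ) : (∑ i ∈ range m, (m - i)) * 2 = m * (m + 1) := by
  rw [← Finset.sum_range_reflect]
  rw [Finset.sum_congr rfl (fun i hi => show m - (m - 1 - i) = i + 1 by
    simp only [mem_range] at hi; omega)]
  have h := Finset.sum_range_succ' (fun i => i) m
  simp only [add_zero] at h
  rw [show (∑ i ∈ range m, (i + 1)) = ∑ i ∈ range (m + 1), i by rw [h],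
    Finset.sum_range_id_mul_two]
  simp [Nat.mul_comm]

lemma icc_gauss (n : ℕ) (hn : 1 ≤ n) :
    (∑ k ∈ Finset.Icc 1 (n - 1), (n - k)) * 2 = n * (n - 1) := by
  have h : ∑ k ∈ Finset.Icc 1 (n - 1), (n - k) = ∑ i ∈ range (n - 1), ((n - 1) - i) := by
    refine Finset.sum_nbij' (fun k => k - 1) (fun i => i + 1) ?_ ?_ ?_ ?_ ?_
    · intro k hk; simp only [Finset.mem_Icc] at hk; simp only [mem_range]; omega
    · intro i hi; simp only [mem_range] at hi; simp only [Finset.mem_Icc]; omega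
    · intro k hk; simp only [Finset.mem_Icc] at hk; omega
    · intro i hi; simp only [mem_range] at hi; omega
    · intro k hk; simp only [Finset.mem_Icc] at hk; omega
  rw [h, gauss_reflect (n - 1)]
  have : n - 1 + 1 = n := by omega
  rw [this, Nat.mul_comm]

theorem starlike_coeff_recursion (G Q : ℂ → ℂ) (g q : ℕ → ℂ)
    (hG : ∀ z ∈ ball (0:ℂ) 1, HasSum (fun n => g n * z ^ n) (G z))
    (hQ : ∀ z ∈ ball (0:ℂ) 1, HasSum (fun n => q n * z ^ n) (Q z))
    (hg0 : g 0 = 0) (hg1 : g 1 = 1) (hq0 : q 0 = 1)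
    (hqb : ∀ n, 1 ≤ n → ‖q n‖ ≤ 2)
    (heq : ∀ z ∈ ball (0:ℂ) 1, z * deriv G z = Q z * G z) :
    (∀ n : ℕ, 2 ≤ n → ((n : ℂ) - 1) * g n = ∑ k ∈ Finset.Icc 1 (n - 1), g (n - k) * q k) ∧
    (∀ n, 1 ≤ n → ‖g n‖ ≤ n) := by
  set c : ℕ → ℂ := fun n => (∑ k ∈ range (n + 1), q k * g (n - k)) - (n : ℂ) * g n with hc_def
  have hzero : ∀ z ∈ ball (0:ℂ) 1, HasSum (fun n => c n * z ^ n) ((fun _ => (0:ℂ)) z) := by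
    intro z hz
    have hsg : Summable (fun n => ‖g n * z ^ n‖) :=
      summable_norm_iff.mpr (hG z hz).summable
    have hsq : Summable (fun n => ‖q n * z ^ n‖) :=
      summable_norm_iff.mpr (hQ z hz).summable
    have h1 := hasSum_sum_range_mul_of_summable_norm hsq hsg
    rw [(hQ z hz).tsum_eq, (hG z hz).tsum_eq] at h1
    have h1' : HasSum (fun n => (∑ k ∈ range (n + 1), q k * g (n - k)) * z ^ n) (Q z * G z) := by
      convert h1 using 2 with n
      · rfl
      rw [Finset.sum_mul]
      refine Finset.sum_congr rfl (fun k hk => ?_)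
      simp only [mem_range, Nat.lt_succ_iff] at hk
      have hzz : z ^ n = z ^ k * z ^ (n - k) := by
        rw [← pow_add]; congr 1; omega
      rw [hzz]; ring
    have h2 := hasSum_zderiv (hasFPS_of_forall_hasSum hG) hz
    rw [heq z hz] at h2
    have h5 := h1'.sub h2
    simp only [sub_self] at h5
    convert h5 using 2 with n
    · rfl
    simp only [hc_def]
    ring
  have hc0 : c = 0 := by
    have hb := hasFPS_of_forall_hasSum hzero
    have hz := (hb.hasFPowerSeriesAt).eq_zero
    rwa [ofScalars_series_eq_zero] at hz
  have key : ∀ n : ℕ, (∑ k ∈ range (n + 1), q k * g (n - k)) = (n : ℂ) * g n := by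
    intro n
    have := congrFun hc0 n
    simp only [hc_def, Pi.zero_apply, sub_eq_zero] at this
    exact this
  have hrec : ∀ n : ℕ, 2 ≤ n →
      ((n : ℂ) - 1) * g n = ∑ k ∈ Finset.Icc 1 (n - 1), g (n - k) * q k := by
    intro n hn
    obtain ⟨m, rfl⟩ : ∃ m, n = m + 2 := ⟨n - 2, by omega⟩
    have h := key (m + 2)
    rw [Finset.sum_range_succ'] at h
    rw [Finset.sum_range_succ] at h
    have hz0 : q (m + 1 + 1) * g (m + 2 - (m + 1 + 1)) = 0 := by
      simp [hg0]
    rw [hz0, add_zero, hq0] at h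
    simp only [Nat.sub_zero, one_mul] at h
    -- h : (∑ i ∈ range (m+1), q (i+1) * g (m+2 - (i+1))) + g (m+2) = (m+2) * g (m+2)
    have hicc : ∑ k ∈ Finset.Icc 1 (m + 2 - 1), g (m + 2 - k) * q k
        = ∑ i ∈ range (m + 1), q (i + 1) * g (m + 2 - (i + 1)) := by
      refine Finset.sum_nbij' (fun k => k - 1) (fun i => i + 1) ?_ ?_ ?_ ?_ ?_
      · intro k hk; simp only [Finset.mem_Icc] at hk; simp only [mem_range]; omega
      · intro i hi; simp only [mem_range] at hi; simp only [Finset.mem_Icc]; omega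
      · intro k hk; simp only [Finset.mem_Icc] at hk; omega
      · intro i hi; simp only [mem_range] at hi; omega
      · intro k hk
        simp only [Finset.mem_Icc] at hk
        rw [show k - 1 + 1 = k by omega]
        ring
    simp only [Nat.succ_sub_succ_eq_sub, Nat.sub_zero, Nat.add_sub_cancel] at h hicc
    simp only [Nat.succ_sub_succ_eq_sub, Nat.sub_zero, Nat.add_sub_cancel]
    rw [hicc]
    push_cast at h ⊢
    linear_combination -h
  refine ⟨hrec, ?_⟩
  intro n
  induction n using Nat.strong_induction_on with
  | _ n ih =>
    intro hn
    rcases eq_or_lt_of_le hn with h1 | h2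
    · rw [← h1, hg1]; simp
    · have h2' : 2 ≤ n := h2
      have hr := hrec n h2'
      have hn2 : (2:ℝ) ≤ (n:ℝ) := by exact_mod_cast h2'
      have hnorm : ((n:ℝ) - 1) * ‖g n‖ ≤ ((n:ℝ) - 1) * (n:ℝ) := by
        calc ((n:ℝ) - 1) * ‖g n‖ = ‖((n:ℂ) - 1) * g n‖ := by
              rw [norm_mul]
              congr 1
              rw [show ((n:ℂ) - 1) = (((n:ℝ) - 1 : ℝ) : ℂ) by push_cast; ring,
                Complex.norm_real, Real.norm_eq_abs, abs_of_nonneg (by linarith)]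
          _ = ‖∑ k ∈ Finset.Icc 1 (n - 1), g (n - k) * q k‖ := by rw [hr]
          _ ≤ ∑ k ∈ Finset.Icc 1 (n - 1), ‖g (n - k) * q k‖ := norm_sum_le _ _
          _ ≤ ∑ k ∈ Finset.Icc 1 (n - 1), ((n - k : ℕ) : ℝ) * 2 := by
              refine Finset.sum_le_sum (fun k hk => ?_)
              simp only [Finset.mem_Icc] at hk
              rw [norm_mul]
              have hb1 : ‖g (n - k)‖ ≤ ((n - k : ℕ) : ℝ) := ih (n - k) (by omega) (by omega)
              have hb2 : ‖q k‖ ≤ 2 := hqb k hk.1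
              exact mul_le_mul hb1 hb2 (norm_nonneg _) (Nat.cast_nonneg _)
          _ = ((n:ℝ) - 1) * (n:ℝ) := by
              rw [← Finset.sum_mul]
              have hg2 : (((∑ k ∈ Finset.Icc 1 (n - 1), (n - k)) * 2 : ℕ) : ℝ)
                  = ((n * (n - 1) : ℕ) : ℝ) := by
                rw [icc_gauss n (by omega)]
              push_cast [Nat.cast_sub (show 1 ≤ n by omega)] at hg2
              linarith
      have hpos : (0:ℝ) < (n:ℝ) - 1 := by linarith
      exact le_of_mul_le_mul_left hnorm hpos
end

section
/- Let f₀, ω : 𝔻 → ℂ be analytic with |ω(z)| ≤ k on 𝔻 for some k ∈ [0,1], and let f_l be analytic on 𝔻 with f_l(0) = 0 and f_l'(z) = ω(z)·f₀'(z) on 𝔻, where f₀(0) = 0. Then M_r(f_l) ≤ k·M_r(f₀) for all 0 ≤ r ≤ 1/3, where M_r denotes the majorant series. -/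
open Metric Filter Finset FormalMultilinearSeries

lemma memball_of_norm {z : ℂ} (h : ‖z‖ < 1) : z ∈ Metric.eball (0:ℂ) 1 := by
  rw [EMetric.mem_ball, edist_zero_right, enorm_eq_nnnorm, ← ENNReal.coe_one, ENNReal.coe_lt_coe,
    ← NNReal.coe_lt_coe]
  simpa using h

lemma H1 {g : ℂ → ℂ} {u : ℕ → ℂ}
    (h : ∀ z ∈ ball (0:ℂ) 1, HasSum (fun n => u n * z ^ n) (g z)) :
    HasFPowerSeriesOnBall g (ofScalars ℂ u) 0 1 := by
  constructor
  · apply ENNReal.le_of_forall_nnreal_lt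
    intro r hr
    apply (ofScalars ℂ u).le_radius_of_tendsto (l := 0)
    have hz : ((r:ℝ):ℂ) ∈ ball (0:ℂ) 1 := by
      rw [mem_ball_zero_iff, Complex.norm_real, Real.norm_eq_abs,
        abs_of_nonneg r.coe_nonneg]
      exact_mod_cast hr
    have := ((h _ hz).summable).tendsto_atTop_zero.norm
    simp only [norm_zero] at this
    convert this using 2 with n
    rw [ofScalars_norm, norm_mul, norm_pow, Complex.norm_real, Real.norm_eq_abs,
      abs_of_nonneg r.coe_nonneg]
  · exact one_pos
  · intro y hy
    rw [EMetric.mem_ball, edist_zero_right, enorm_eq_nnnorm, ← ENNReal.coe_one, ENNReal.coe_lt_coe] at hy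
    have hy' : y ∈ ball (0:ℂ) 1 := by
      rw [mem_ball_zero_iff]; exact_mod_cast hy
    rw [zero_add]
    have := h y hy'
    simp only [ofScalars_apply_eq, smul_eq_mul]
    exact this

lemma Hcoeff (u : ℕ → ℂ) (n : ℕ) : (ofScalars ℂ u).coeff n = u n := by
  show (ofScalars ℂ u n) (fun _ => (1:ℂ)) = u n
  rw [ofScalars_apply_eq, smul_eq_mul, one_pow, mul_one]

lemma H5 {g : ℂ → ℂ} {u v : ℕ → ℂ}
    (hu : ∀ z ∈ ball (0:ℂ) 1, HasSum (fun n => u n * z ^ n) (g z))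
    (hv : ∀ z ∈ ball (0:ℂ) 1, HasSum (fun n => v n * z ^ n) (g z)) : u = v :=
  ofScalars_series_injective ℂ ℂ
    ((H1 hu).hasFPowerSeriesAt.eq_formalMultilinearSeries (H1 hv).hasFPowerSeriesAt)

lemma H3 {g : ℂ → ℂ} {u : ℕ → ℂ}
    (h : ∀ z ∈ ball (0:ℂ) 1, HasSum (fun n => u n * z ^ n) (g z))
    {z : ℂ} (hz : z ∈ ball (0:ℂ) 1) :
    Summable (fun n => ‖u n * z ^ n‖) := by
  have h1 := H1 h
  have := (ofScalars ℂ u).summable_norm_apply (x := z) (by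
    refine lt_of_lt_of_le ?_ h1.r_le
    exact memball_of_norm (mem_ball_zero_iff.mp hz))
  convert this using 2 with n
  rw [ofScalars_apply_eq, smul_eq_mul]

lemma H4 {f : ℂ → ℂ} {u : ℕ → ℂ}
    (h : ∀ z ∈ ball (0:ℂ) 1, HasSum (fun n => u n * z ^ n) (f z)) :
    ∀ z ∈ ball (0:ℂ) 1, HasSum (fun n : ℕ => (n:ℂ) * u n * z ^ n) (z * deriv f z) := by
  intro z hz
  have h1 := H1 h
  have h2 := h1.fderiv
  have hz' := memball_of_norm (mem_ball_zero_iff.mp hz)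
  have h3 := h2.hasSum hz'
  rw [zero_add] at h3
  have h4 := h3.mapL (ContinuousLinearMap.apply ℂ ℂ z)
  simp only [ContinuousLinearMap.apply_apply] at h4
  have h5 : (fderiv ℂ f z) z = z * deriv f z := by
    calc (fderiv ℂ f z) z = (fderiv ℂ f z) (z • 1) := by rw [smul_eq_mul, mul_one]
    _ = z • (fderiv ℂ f z) 1 := (fderiv ℂ f z).map_smul z 1
    _ = z * deriv f z := by rw [fderiv_apply_one_eq_deriv, smul_eq_mul]
  rw [h5] at h4
  have h6 : ∀ n : ℕ, ((ofScalars ℂ u).derivSeries n fun _ => z) z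
      = ((n:ℂ)+1) * u (n+1) * z ^ (n+1) := by
    intro n
    rw [derivSeries_apply_diag, ofScalars_apply_eq, smul_eq_mul, nsmul_eq_mul]
    push_cast; ring
  rw [funext h6] at h4
  have h7 := (hasSum_nat_add_iff (f := fun n : ℕ => (n:ℂ) * u n * z ^ n) 1).mp (by
    convert h4 using 2 with n
    push_cast; ring)
  simpa using h7
lemma H6 {ω : ℂ → ℂ} (hω : DifferentiableOn ℂ ω (ball 0 1)) :
    ∃ c : ℕ → ℂ, ∀ z ∈ ball (0:ℂ) 1, HasSum (fun n => c n * z ^ n) (ω z) := by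
  have key : ∀ ρ : NNReal, 0 < ρ → (ρ:ℝ) < 1 →
      HasFPowerSeriesOnBall ω (cauchyPowerSeries ω 0 ρ) 0 ρ := by
    intro ρ h0 h1
    refine DifferentiableOn.hasFPowerSeriesOnBall ?_ h0
    exact hω.mono (fun x hx => mem_ball_zero_iff.mpr (lt_of_le_of_lt (mem_closedBall_zero_iff.mp hx) h1))
  set q := cauchyPowerSeries ω 0 (2⁻¹ : NNReal) with hq
  refine ⟨q.coeff, fun z hz => ?_⟩
  rw [mem_ball_zero_iff] at hz
  set ρ : NNReal := ⟨max (2⁻¹) ((1 + ‖z‖)/2), by positivity⟩ with hρ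
  have hρ1 : (ρ:ℝ) < 1 := by
    simp only [hρ, NNReal.coe_mk, max_lt_iff]
    show max (2⁻¹:ℝ) ((1 + ‖z‖)/2) < 1; rw [max_lt_iff]
    constructor <;> [norm_num; linarith]
  have hρ0 : 0 < ρ := by
    rw [← NNReal.coe_pos]; show (0:ℝ) < max 2⁻¹ ((1 + ‖z‖)/2)
    have : (0:ℝ) < 2⁻¹ := by norm_num
    exact lt_max_of_lt_left this
  have hzρ : ‖z‖ < (ρ:ℝ) := by
    simp only [hρ, NNReal.coe_mk]
    refine lt_max_of_lt_right (by linarith)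
  have h2 := key ρ hρ0 hρ1
  have h3 := key 2⁻¹ (by norm_num) (by norm_num)
  have heq : q = cauchyPowerSeries ω 0 ρ :=
    h3.hasFPowerSeriesAt.eq_formalMultilinearSeries h2.hasFPowerSeriesAt
  have h4 := h2.hasSum (y := z) (by
    rw [EMetric.mem_ball, edist_zero_right]
    exact_mod_cast (show ‖z‖₊ < ρ by rwa [← NNReal.coe_lt_coe, coe_nnnorm]))
  rw [zero_add] at h4
  have h5 : (fun n => q.coeff n * z ^ n) = fun n => (cauchyPowerSeries ω 0 ρ n) fun _ => z := by
    funext n; rw [FormalMultilinearSeries.apply_eq_pow_smul_coeff, smul_eq_mul, ← heq, mul_comm]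
  rw [h5]; exact h4


open Real in
lemma Hcb {ω : ℂ → ℂ} {c : ℕ → ℂ} {k : ℝ}
    (hω : DifferentiableOn ℂ ω (ball 0 1))
    (hωb : ∀ z ∈ ball (0:ℂ) 1, ‖ω z‖ ≤ k)
    (hc : ∀ z ∈ ball (0:ℂ) 1, HasSum (fun n => c n * z ^ n) (ω z))
    (n : ℕ) : ‖c n‖ ≤ k := by
  have key : ∀ ρ : ℝ, 0 < ρ → ρ < 1 → ‖c n‖ * ρ^n ≤ k := by
    intro ρ h0 h1
    set ρ' : NNReal := ⟨ρ, h0.le⟩ with hρ'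
    have hball : HasFPowerSeriesOnBall ω (cauchyPowerSeries ω 0 ρ') 0 ρ' := by
      refine DifferentiableOn.hasFPowerSeriesOnBall ?_ (by exact_mod_cast h0)
      exact hω.mono (fun x hx => mem_ball_zero_iff.mpr
        (lt_of_le_of_lt (mem_closedBall_zero_iff.mp hx) (by exact_mod_cast h1)))
    have heq : ofScalars ℂ c = cauchyPowerSeries ω 0 ρ' :=
      (H1 hc).hasFPowerSeriesAt.eq_formalMultilinearSeries hball.hasFPowerSeriesAt
    have hnorm : ‖c n‖ = ‖cauchyPowerSeries ω 0 ρ' n‖ := by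
      rw [← heq, ofScalars_norm]
    have hmem : ∀ θ : ℝ, circleMap 0 ρ' θ ∈ ball (0:ℂ) 1 := by
      intro θ
      rw [mem_ball_zero_iff]
      show ‖circleMap 0 ρ' θ‖ < 1
      rw [norm_circleMap_zero]
      rw [show (ρ':ℝ) = ρ from rfl, abs_of_pos h0]; exact h1
    have hcont : ContinuousOn (fun θ : ℝ => ‖ω (circleMap 0 (ρ':ℝ) θ)‖)
        (Set.uIcc 0 (2*π)) := by
      apply ContinuousOn.norm
      exact hω.continuousOn.comp (continuous_circleMap 0 (ρ':ℝ)).continuousOn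
        (fun θ _ => hmem θ)
    have hint : (∫ θ in (0:ℝ)..(2*π), ‖ω (circleMap 0 ρ' θ)‖) ≤ 2 * π * k := by
      have := intervalIntegral.integral_mono_on (μ := MeasureTheory.volume) (by positivity)
        (hcont.intervalIntegrable) (intervalIntegrable_const)
        (fun θ _ => hωb _ (hmem θ))
      simpa using this
    have hbound := norm_cauchyPowerSeries_le ω 0 ρ' n
    rw [← hnorm] at hbound
    have hk0 : (0:ℝ) ≤ k := le_trans (norm_nonneg _) (hωb 0 (by simp))
    have hratio : (0:ℝ) ≤ |(ρ':ℝ)|⁻¹ ^ n := by positivity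
    have h2 : ‖c n‖ ≤ k * |(ρ':ℝ)|⁻¹ ^ n := by
      refine le_trans hbound ?_
      have h3 : (2*π)⁻¹ * (∫ θ in (0:ℝ)..(2*π), ‖ω (circleMap 0 ρ' θ)‖) ≤ k := by
        rw [inv_mul_le_iff₀ (by positivity)]
        linarith [hint]
      exact mul_le_mul_of_nonneg_right h3 hratio
    have hρabs : |(ρ':ℝ)| = ρ := by rw [show (ρ':ℝ) = ρ from rfl, abs_of_pos h0]
    calc ‖c n‖ * ρ^n ≤ (k * |(ρ':ℝ)|⁻¹ ^ n) * ρ^n :=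
          mul_le_mul_of_nonneg_right h2 (by positivity)
    _ = k := by rw [hρabs, inv_pow, mul_assoc, inv_mul_cancel₀ (by positivity), mul_one]
  have htend : Tendsto (fun ρ : ℝ => ‖c n‖ * ρ^n) (nhdsWithin 1 (Set.Iio 1))
      (nhds (‖c n‖ * 1^n)) := by
    apply Tendsto.mono_left _ nhdsWithin_le_nhds
    exact (Continuous.tendsto (by continuity) 1)
  have := le_of_tendsto htend (by
    filter_upwards [Ioo_mem_nhdsLT_of_mem (Set.mem_Ioc.mpr ⟨zero_lt_one, le_refl 1⟩)]
      with ρ hρ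
    exact key ρ hρ.1 hρ.2)
  simpa using this

lemma norm_one_of_pow {a : ℝ} (ha : 0 ≤ a) {n : ℕ} (hn : n ≠ 0) (h : a ^ n = 1) : a = 1 := by
  rcases lt_trichotomy a 1 with h1 | h1 | h1
  · have := pow_lt_one₀ ha h1 hn; rw [h] at this; linarith
  · exact h1
  · have := one_lt_pow₀ h1 hn; rw [h] at this; linarith

lemma rootsum {n : ℕ} (hn : n ≠ 0) (m : ℕ) :
    ∑ j ∈ Finset.range n, (Complex.exp (2 * Real.pi * Complex.I / n) ^ m) ^ j
      = if n ∣ m then (n:ℂ) else 0 := by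
  have prim := Complex.isPrimitiveRoot_exp n hn
  by_cases hd : n ∣ m
  · rw [if_pos hd, (prim.pow_eq_one_iff_dvd m).mpr hd]
    simp
  · rw [if_neg hd]
    have hne : Complex.exp (2 * Real.pi * Complex.I / n) ^ m ≠ 1 :=
      fun h => hd ((prim.pow_eq_one_iff_dvd m).mp h)
    rw [geom_sum_eq hne, ← pow_mul, mul_comm m n, pow_mul, prim.pow_eq_one, one_pow,
      sub_self, zero_div]

lemma mobius_bound {β ζ : ℂ} {k : ℝ} (hβ : ‖β‖ ≤ k) (hζ : ‖ζ‖ ≤ k) :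
    ‖(k:ℂ) * (ζ - β)‖ ≤ ‖(k:ℂ)^2 - (starRingEnd ℂ) β * ζ‖ := by
  have h1 : β.re^2 + β.im^2 ≤ k^2 := by
    have := pow_le_pow_left₀ (norm_nonneg β) hβ 2
    rw [Complex.sq_norm, Complex.normSq_apply] at this
    nlinarith [this]
  have h2 : ζ.re^2 + ζ.im^2 ≤ k^2 := by
    have := pow_le_pow_left₀ (norm_nonneg ζ) hζ 2
    rw [Complex.sq_norm, Complex.normSq_apply] at this
    nlinarith [this]
  have key : Complex.normSq ((k:ℂ) * (ζ - β)) ≤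
      Complex.normSq ((k:ℂ)^2 - (starRingEnd ℂ) β * ζ) := by
    have hk2 : ((k:ℂ))^2 = ((k^2 : ℝ):ℂ) := by push_cast; ring
    rw [hk2]
    simp only [Complex.normSq_apply, Complex.mul_re, Complex.mul_im, Complex.sub_re,
      Complex.sub_im, Complex.ofReal_re, Complex.ofReal_im, Complex.conj_re, Complex.conj_im]
    nlinarith [mul_nonneg (sub_nonneg.mpr h1) (sub_nonneg.mpr h2)]
  rw [Complex.norm_def, Complex.norm_def]
  exact Real.sqrt_le_sqrt key

lemma wiener {ω : ℂ → ℂ} {c : ℕ → ℂ} {k : ℝ}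
    (hc : ∀ z ∈ ball (0:ℂ) 1, HasSum (fun m => c m * z ^ m) (ω z))
    (hωb : ∀ z ∈ ball (0:ℂ) 1, ‖ω z‖ ≤ k)
    (hcb : ∀ m, ‖c m‖ ≤ k)
    {n : ℕ} (hn : 1 ≤ n) : k * ‖c n‖ ≤ k^2 - ‖c 0‖^2 := by
  have hk0 : 0 ≤ k := le_trans (norm_nonneg _) (hcb 0)
  have hn0 : n ≠ 0 := Nat.one_le_iff_ne_zero.mp hn
  set ζ : ℂ := Complex.exp (2 * Real.pi * Complex.I / n) with hζ
  have hζ1 : ‖ζ‖ = 1 := by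
    have := (Complex.isPrimitiveRoot_exp n hn0).pow_eq_one
    have h2 : ‖ζ‖ ^ n = 1 := by
      rw [← norm_pow, hζ, this, norm_one]
    exact norm_one_of_pow (norm_nonneg _) hn0 h2
  set γ : ℕ → ℂ := fun m => c (n*m) with hγ
  set G : ℂ → ℂ := fun w => ∑' m, γ m * w^m with hGdef
  have SG : ∀ w ∈ ball (0:ℂ) 1, HasSum (fun m => γ m * w^m) (G w) := by
    intro w hw
    rw [mem_ball_zero_iff] at hw
    apply Summable.hasSum
    apply Summable.of_norm
    apply Summable.of_nonneg_of_le (fun m => norm_nonneg _) (fun m => ?_)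
      (((summable_geometric_of_lt_one (norm_nonneg w) hw)).mul_left k)
    rw [norm_mul, norm_pow]
    exact mul_le_mul_of_nonneg_right (hcb _) (by positivity)
  have hG1 := H1 SG
  have hGdiff : DifferentiableOn ℂ G (ball 0 1) :=
    (hG1.differentiableOn).mono (fun w hw => memball_of_norm (mem_ball_zero_iff.mp hw))
  have hG0 : G 0 = c 0 := by
    have h1 := SG 0 (mem_ball_self one_pos)
    have h2 : HasSum (fun m => γ m * 0^m) (γ 0 * 0^0) := by
      apply hasSum_single 0
      intro m hm
      simp [zero_pow hm]
    have h3 := h1.unique h2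
    simp only [pow_zero, mul_one] at h3
    rw [h3, hγ]; norm_num
  have hGd : deriv G 0 = c n := by
    rw [hG1.hasFPowerSeriesAt.deriv]
    show (ofScalars ℂ γ) 1 (fun _ => (1:ℂ)) = c n
    rw [ofScalars_apply_eq, smul_eq_mul, one_pow, mul_one, hγ]; norm_num
  -- Key identity
  have KI : ∀ v ∈ ball (0:ℂ) 1, (n:ℂ) * G (v^n) = ∑ j ∈ Finset.range n, ω (ζ^j * v) := by
    intro v hv
    have hv1 := mem_ball_zero_iff.mp hv
    have hvn : v^n ∈ ball (0:ℂ) 1 := by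
      rw [mem_ball_zero_iff, norm_pow]
      exact pow_lt_one₀ (norm_nonneg _) hv1 hn0
    have hmem : ∀ j : ℕ, ζ^j * v ∈ ball (0:ℂ) 1 := by
      intro j
      rw [mem_ball_zero_iff, norm_mul, norm_pow, hζ1, one_pow, one_mul]
      exact hv1
    have hsum1 : HasSum (fun m => ∑ j ∈ Finset.range n, c m * (ζ^j * v)^m)
        (∑ j ∈ Finset.range n, ω (ζ^j * v)) :=
      hasSum_sum (fun j _ => hc _ (hmem j))
    have hterm : (fun m => ∑ j ∈ Finset.range n, c m * (ζ^j * v)^m)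
        = (fun m => if n ∣ m then (n:ℂ) * (c m * v^m) else 0) := by
      funext m
      have he : ∀ j, c m * (ζ^j * v)^m = (ζ^m)^j * (c m * v^m) := by
        intro j
        rw [mul_pow, ← pow_mul, mul_comm j m, pow_mul]
        ring
      rw [Finset.sum_congr rfl (fun j _ => he j), ← Finset.sum_mul, hζ, rootsum hn0 m]
      split_ifs <;> ring
    rw [hterm] at hsum1
    have hinj : Function.Injective (fun m : ℕ => n * m) := fun x y h => by
      exact Nat.eq_of_mul_eq_mul_left (Nat.pos_of_ne_zero hn0) h
    have hside : ∀ x ∉ Set.range (fun m : ℕ => n * m),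
        (if n ∣ x then (n:ℂ) * (c x * v^x) else 0) = 0 := by
      intro x hx
      rw [if_neg]
      intro ⟨m, hm⟩
      exact hx ⟨m, hm.symm⟩
    have hsum2 := (hinj.hasSum_iff hside).mpr hsum1
    have hcomp : ((fun m => if n ∣ m then (n:ℂ) * (c m * v^m) else 0) ∘ (fun m : ℕ => n * m))
        = fun m => (n:ℂ) * (γ m * (v^n)^m) := by
      funext m
      simp only [Function.comp_apply, if_pos (Dvd.intro m rfl), hγ, ← pow_mul]
    rw [hcomp] at hsum2
    exact ((SG _ hvn).mul_left (n:ℂ)).unique hsum2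
  -- Bound on G
  have Gbound : ∀ w ∈ ball (0:ℂ) 1, ‖G w‖ ≤ k := by
    intro w hw
    obtain ⟨v, hv⟩ := IsAlgClosed.exists_pow_nat_eq w (Nat.pos_of_ne_zero hn0)
    have hvb : v ∈ ball (0:ℂ) 1 := by
      rw [mem_ball_zero_iff]
      by_contra hge
      push_neg at hge
      have h1 : (1:ℝ) ≤ ‖w‖ := by
        rw [← hv, norm_pow]
        exact one_le_pow₀ hge
      rw [mem_ball_zero_iff] at hw
      linarith
    have hKI := KI v hvb
    rw [hv] at hKI
    have hmem : ∀ j : ℕ, ζ^j * v ∈ ball (0:ℂ) 1 := by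
      intro j
      rw [mem_ball_zero_iff, norm_mul, norm_pow, hζ1, one_pow, one_mul]
      exact mem_ball_zero_iff.mp hvb
    have hnorm : (n:ℝ) * ‖G w‖ ≤ (n:ℝ) * k := by
      calc (n:ℝ) * ‖G w‖ = ‖(n:ℂ) * G w‖ := by
            rw [norm_mul, Complex.norm_natCast]
      _ = ‖∑ j ∈ Finset.range n, ω (ζ^j * v)‖ := by rw [hKI]
      _ ≤ ∑ j ∈ Finset.range n, ‖ω (ζ^j * v)‖ := norm_sum_le _ _
      _ ≤ ∑ j ∈ Finset.range n, k := Finset.sum_le_sum (fun j _ => hωb _ (hmem j))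
      _ = (n:ℝ) * k := by rw [Finset.sum_const, Finset.card_range, nsmul_eq_mul]
    have hnpos : (0:ℝ) < n := by exact_mod_cast Nat.pos_of_ne_zero hn0
    exact le_of_mul_le_mul_left hnorm hnpos
  -- Schwarz-Pick step
  rcases eq_or_lt_of_le (hcb 0) with hco | hco
  · -- ‖c 0‖ = k : G is constant, deriv = 0
    have hmax : IsMaxOn (norm ∘ G) (ball (0:ℂ) 1) 0 := by
      rw [isMaxOn_iff]
      intro u hu
      simp only [Function.comp_apply, hG0, hco]
      exact Gbound u hu
    have heq := Complex.eqOn_of_isPreconnected_of_isMaxOn_norm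
      (convex_ball (0:ℂ) 1).isPreconnected isOpen_ball hGdiff (mem_ball_self one_pos) hmax
    have hd0 : deriv G 0 = 0 := by
      have hev : G =ᶠ[nhds (0:ℂ)] (fun _ => G 0) := by
        filter_upwards [ball_mem_nhds (0:ℂ) one_pos] with u hu using heq hu
      rw [hev.deriv_eq]
      exact deriv_const _ _
    rw [hGd] at hd0
    rw [hd0, norm_zero, mul_zero, ← hco]
    nlinarith [norm_nonneg (c 0)]
  · -- ‖c 0‖ < k
    have hkpos : 0 < k := lt_of_le_of_lt (norm_nonneg _) hco
    set β := c 0 with hβ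
    set den : ℂ → ℂ := fun w => (k:ℂ)^2 - (starRingEnd ℂ) β * G w with hden
    have hdenlt : ∀ w ∈ ball (0:ℂ) 1, ‖(starRingEnd ℂ) β * G w‖ < k^2 := by
      intro w hw
      rw [norm_mul, RCLike.norm_conj]
      calc ‖β‖ * ‖G w‖ ≤ ‖β‖ * k := mul_le_mul_of_nonneg_left (Gbound w hw) (norm_nonneg _)
      _ < k * k := mul_lt_mul_of_pos_right hco hkpos
      _ = k^2 := (sq k).symm
    have hdenne : ∀ w ∈ ball (0:ℂ) 1, den w ≠ 0 := by
      intro w hw h0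
      rw [hden] at h0
      have h1 : (k:ℂ)^2 = (starRingEnd ℂ) β * G w := by
        rwa [sub_eq_zero] at h0
      have h2 := congrArg norm h1
      rw [norm_pow, Complex.norm_real, Real.norm_eq_abs, abs_of_pos hkpos] at h2
      linarith [hdenlt w hw, h2.symm.le]
    set h : ℂ → ℂ := fun w => (k:ℂ) * (G w - β) / den w with hh
    have hdiff : DifferentiableOn ℂ h (ball 0 1) := by
      apply DifferentiableOn.div
      · exact (hGdiff.sub_const β).const_mul _
      · exact (hGdiff.const_mul _).const_sub _
      · exact hdenne
    have hb1 : ∀ w ∈ ball (0:ℂ) 1, ‖h w‖ ≤ 1 := by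
      intro w hw
      rw [hh]
      simp only [norm_div]
      exact div_le_one_of_le₀ (mobius_bound (hcb 0) (Gbound w hw)) (norm_nonneg _)
    have hh0 : h 0 = 0 := by
      rw [hh]
      simp only [hG0, ← hβ, sub_self, mul_zero, zero_div]
    have hmaps : Set.MapsTo h (ball (0:ℂ) 1) (ball (h 0) 1) := by
      rw [hh0]
      intro w hw
      rw [mem_ball_zero_iff]
      rcases lt_or_eq_of_le (hb1 w hw) with hlt | heq1
      · exact hlt
      · exfalso
        have hmax : IsMaxOn (norm ∘ h) (ball (0:ℂ) 1) w := by
          rw [isMaxOn_iff]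
          intro u hu
          simp only [Function.comp_apply, heq1]
          exact hb1 u hu
        have heqon := Complex.eqOn_of_isPreconnected_of_isMaxOn_norm
          (convex_ball (0:ℂ) 1).isPreconnected isOpen_ball hdiff hw hmax
        have h1 := heqon (mem_ball_self one_pos)
        simp only [Function.const_apply] at h1
        rw [hh0] at h1
        rw [← h1, norm_zero] at heq1
        exact one_ne_zero heq1.symm
    have hSchwarz := Complex.norm_deriv_le_div_of_mapsTo_ball hdiff (hmaps.mono_right ball_subset_closedBall) one_pos
    have hGat : DifferentiableAt ℂ G 0 := hGdiff.differentiableAt (ball_mem_nhds _ one_pos)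
    have hG' : HasDerivAt G (deriv G 0) 0 := hGat.hasDerivAt
    have hnum : HasDerivAt (fun w => (k:ℂ) * (G w - β)) ((k:ℂ) * deriv G 0) 0 :=
      (hG'.sub_const β).const_mul _
    have hdend : HasDerivAt den (-((starRingEnd ℂ) β * deriv G 0)) 0 := by
      rw [hden]
      exact (hG'.const_mul ((starRingEnd ℂ) β)).const_sub _
    have hdiv := hnum.div hdend (hdenne 0 (mem_ball_self one_pos))
    have hnum0 : (k:ℂ) * (G 0 - β) = 0 := by
      rw [hG0, sub_self, mul_zero]
    have hderiv0 : deriv h 0 = (k:ℂ) * deriv G 0 / den 0 := by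
      have hd0 := hdenne 0 (mem_ball_self one_pos)
      rw [hh, show (fun w => (k:ℂ) * (G w - β) / den w) = (fun w => (k:ℂ) * (G w - β)) / den from rfl,
        hdiv.deriv, hnum0]
      field_simp
      ring
    have hden0 : den 0 = ((k^2 - ‖β‖^2 : ℝ) : ℂ) := by
      show (k:ℂ)^2 - (starRingEnd ℂ) β * G 0 = _
      rw [hG0, mul_comm, Complex.mul_conj, Complex.normSq_eq_norm_sq]
      push_cast
      rfl
    have hpos : (0:ℝ) < k^2 - ‖β‖^2 := by nlinarith [norm_nonneg β]
    have habs : ‖deriv h 0‖ = k * ‖deriv G 0‖ / (k^2 - ‖β‖^2) := by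
      rw [hderiv0, norm_div, norm_mul, hden0, Complex.norm_real, Real.norm_eq_abs,
        Complex.norm_real, Real.norm_eq_abs, abs_of_pos hkpos, abs_of_pos hpos]
    have hfin : k * ‖deriv G 0‖ / (k^2 - ‖β‖^2) ≤ 1 := by
      rw [← habs]
      calc ‖deriv h 0‖ ≤ 1/1 := hSchwarz
      _ = 1 := by norm_num
    rw [hGd] at hfin
    exact (div_le_one hpos).mp hfin

lemma ENN_antidiag (f g : ℕ → ENNReal) :
    ∑' n : ℕ, ∑ kl ∈ Finset.HasAntidiagonal.antidiagonal n, f kl.1 * g kl.2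
      = (∑' n, f n) * (∑' n, g n) := by
  have h1 : ∀ n : ℕ, ∑ kl ∈ Finset.HasAntidiagonal.antidiagonal n, f kl.1 * g kl.2
      = ∑' kl : ↑(Finset.HasAntidiagonal.antidiagonal n : Finset (ℕ×ℕ)), f (kl:ℕ×ℕ).1 * g (kl:ℕ×ℕ).2 := by
    intro n
    rw [tsum_fintype]
    exact (Finset.sum_finset_coe _ _).symm
  calc ∑' n : ℕ, ∑ kl ∈ Finset.HasAntidiagonal.antidiagonal n, f kl.1 * g kl.2
      = ∑' n : ℕ, ∑' kl : ↑(Finset.HasAntidiagonal.antidiagonal n : Finset (ℕ×ℕ)), f (kl:ℕ×ℕ).1 * g (kl:ℕ×ℕ).2 :=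
        tsum_congr h1
  _ = ∑' p : (Σ n : ℕ, ↑(Finset.HasAntidiagonal.antidiagonal n : Finset (ℕ×ℕ))), f (p.2:ℕ×ℕ).1 * g (p.2:ℕ×ℕ).2 := by
        exact (ENNReal.tsum_sigma'
          (fun p : (Σ n : ℕ, ↑(Finset.HasAntidiagonal.antidiagonal n : Finset (ℕ×ℕ))) =>
            f (p.2:ℕ×ℕ).1 * g (p.2:ℕ×ℕ).2)).symm
  _ = ∑' q : ℕ×ℕ, f q.1 * g q.2 :=
        Finset.HasAntidiagonal.sigmaAntidiagonalEquivProd.tsum_eq (fun q : ℕ×ℕ => f q.1 * g q.2)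
  _ = ∑' (a : ℕ), ∑' (b : ℕ), f a * g b := ENNReal.tsum_prod'
  _ = ∑' (a : ℕ), f a * ∑' (b : ℕ), g b := tsum_congr (fun a => ENNReal.tsum_mul_left)
  _ = (∑' n, f n) * (∑' n, g n) := ENNReal.tsum_mul_right

lemma bohr {c : ℕ → ℂ} {k : ℝ} (hk0 : 0 ≤ k)
    (hcb : ∀ m, ‖c m‖ ≤ k)
    (hw : ∀ n : ℕ, 1 ≤ n → k * ‖c n‖ ≤ k^2 - ‖c 0‖^2)
    {r : ℝ} (h0 : 0 ≤ r) (hr : r ≤ 1/3) :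
    ∑' m : ℕ, (‖c m‖₊ : ENNReal) * (ENNReal.ofReal r)^m ≤ ENNReal.ofReal k := by
  have hterm : ∀ m : ℕ, (‖c m‖₊ : ENNReal) * (ENNReal.ofReal r)^m
      = ENNReal.ofReal (‖c m‖ * r^m) := by
    intro m
    rw [ENNReal.ofReal_mul (norm_nonneg _), ENNReal.ofReal_pow h0, ofReal_norm, enorm_eq_nnnorm]
  rw [tsum_congr hterm]
  rcases eq_or_lt_of_le hk0 with hk | hk
  · have hz : ∀ m, c m = 0 := fun m => norm_le_zero_iff.mp (le_trans (hcb m) hk.ge)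
    have : ∀ m : ℕ, ENNReal.ofReal (‖c m‖ * r^m) = 0 := by
      intro m; rw [hz m]; simp
    rw [tsum_congr this]
    simp
  · set t := ‖c 0‖ with ht
    have ht0 : 0 ≤ t := norm_nonneg _
    have htk : t ≤ k := hcb 0
    have hcw : ∀ n : ℕ, 1 ≤ n → ‖c n‖ ≤ (k^2 - t^2)/k := by
      intro n hn
      rw [le_div_iff₀ hk, mul_comm]
      exact hw n hn
    have hC0 : (0:ℝ) ≤ (k^2 - t^2)/k := by
      apply div_nonneg _ hk.le
      nlinarith
    rw [tsum_eq_zero_add' ENNReal.summable]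
    have hgeo : ∑' m:ℕ, ((1:ℝ)/3)^(m+1) = 1/2 := by
      have hg := tsum_geometric_of_lt_one (by norm_num : (0:ℝ) ≤ 1/3) (by norm_num : (1:ℝ)/3 < 1)
      calc ∑' m:ℕ, ((1:ℝ)/3)^(m+1) = ∑' m:ℕ, (((1:ℝ)/3)^m * (1/3)) := by
            apply tsum_congr; intro m; rw [pow_succ]
      _ = (∑' m:ℕ, ((1:ℝ)/3)^m) * (1/3) := tsum_mul_right
      _ = 1/2 := by rw [hg]; norm_num
    have hsumm : Summable (fun m : ℕ => (k^2-t^2)/k * ((1:ℝ)/3)^(m+1)) := by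
      have he : (fun m : ℕ => (k^2-t^2)/k * ((1:ℝ)/3)^(m+1))
          = fun m : ℕ => ((k^2-t^2)/k * (1/3)) * ((1:ℝ)/3)^m := by
        funext m; ring
      rw [he]
      exact (summable_geometric_of_lt_one (by norm_num) (by norm_num)).mul_left _
    have h1 : ∑' m:ℕ, ENNReal.ofReal (‖c (m+1)‖ * r^(m+1))
        ≤ ENNReal.ofReal ((k^2-t^2)/k * (1/2)) := by
      calc ∑' m:ℕ, ENNReal.ofReal (‖c (m+1)‖ * r^(m+1))
          ≤ ∑' m:ℕ, ENNReal.ofReal ((k^2-t^2)/k * ((1:ℝ)/3)^(m+1)) := by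
            apply ENNReal.tsum_le_tsum
            intro m
            apply ENNReal.ofReal_le_ofReal
            apply mul_le_mul (hcw (m+1) le_add_self)
              (by
                apply pow_le_pow_left₀ h0 ?_ (m+1)
                linarith) (by positivity) hC0
      _ = ENNReal.ofReal (∑' m:ℕ, (k^2-t^2)/k * ((1:ℝ)/3)^(m+1)) :=
            (ENNReal.ofReal_tsum_of_nonneg (fun m => by positivity) hsumm).symm
      _ = ENNReal.ofReal ((k^2-t^2)/k * (1/2)) := by
            rw [tsum_mul_left, hgeo]
    calc ENNReal.ofReal (‖c 0‖ * r^0) + ∑' m:ℕ, ENNReal.ofReal (‖c (m+1)‖ * r^(m+1))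
        ≤ ENNReal.ofReal t + ENNReal.ofReal ((k^2-t^2)/k * (1/2)) := by
          apply add_le_add _ h1
          apply le_of_eq
          rw [pow_zero, mul_one, ht]
    _ = ENNReal.ofReal (t + (k^2-t^2)/k * (1/2)) := (ENNReal.ofReal_add ht0 (by positivity)).symm
    _ ≤ ENNReal.ofReal k := by
          apply ENNReal.ofReal_le_ofReal
          have h2 : (k^2 - t^2)/k * (1/2) ≤ k - t := by
            rw [div_mul_eq_mul_div, div_le_iff₀ hk]
            nlinarith [sq_nonneg (k-t)]
          linarith

theorem majorant_deriv_factor_bound (k : ℝ) (hk : k ∈ Set.Icc (0:ℝ) 1)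
    (f0 fl ω : ℂ → ℂ) (a b : ℕ → ℂ)
    (hω : DifferentiableOn ℂ ω (ball 0 1))
    (hωb : ∀ z ∈ ball (0:ℂ) 1, ‖ω z‖ ≤ k)
    (hb : ∀ z ∈ ball (0:ℂ) 1, HasSum (fun n => b n * z ^ n) (f0 z))
    (ha : ∀ z ∈ ball (0:ℂ) 1, HasSum (fun n => a n * z ^ n) (fl z))
    (hf00 : f0 0 = 0) (hfl0 : fl 0 = 0)
    (hder : ∀ z ∈ ball (0:ℂ) 1, deriv fl z = ω z * deriv f0 z) :
    ∀ r : ℝ, 0 ≤ r → r ≤ 1/3 →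
      majorant a r ≤ ENNReal.ofReal k * majorant b r := by
  intro r hr0 hr3
  obtain ⟨hk0, hk1⟩ := hk
  have ha0 : a 0 = 0 := by
    have h1 := ha 0 (mem_ball_self one_pos)
    rw [hfl0] at h1
    have h2 : HasSum (fun n : ℕ => a n * (0:ℂ)^n) (a 0 * 0^0) :=
      hasSum_single 0 (fun m hm => by simp [zero_pow hm])
    have h3 := h2.unique h1
    simpa using h3
  obtain ⟨c, hc⟩ := H6 hω
  have hcb : ∀ n, ‖c n‖ ≤ k := fun n => Hcb hω hωb hc n
  have hwiener : ∀ n : ℕ, 1 ≤ n → k * ‖c n‖ ≤ k^2 - ‖c 0‖^2 :=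
    fun n hn => wiener hc hωb hcb hn
  have hbohr := bohr hk0 hcb hwiener hr0 hr3
  set A : ℕ → ℂ := fun n => (n:ℂ) * a n with hA
  set D : ℕ → ℂ := fun n => ∑ kl ∈ Finset.HasAntidiagonal.antidiagonal n, c kl.1 * ((kl.2:ℂ) * b kl.2) with hD
  have hAsum : ∀ z ∈ ball (0:ℂ) 1, HasSum (fun n : ℕ => A n * z^n) (z * deriv fl z) := H4 ha
  have hBsum : ∀ z ∈ ball (0:ℂ) 1, HasSum (fun n : ℕ => ((n:ℂ) * b n) * z^n) (z * deriv f0 z) :=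
    H4 hb
  have hDsum : ∀ z ∈ ball (0:ℂ) 1, HasSum (fun n : ℕ => D n * z^n) (z * deriv fl z) := by
    intro z hz
    have s1 : Summable (fun n : ℕ => ‖c n * z^n‖) := H3 hc hz
    have s2 : Summable (fun n : ℕ => ‖((n:ℂ) * b n) * z^n‖) := H3 hBsum hz
    have hps := summable_norm_sum_mul_antidiagonal_of_summable_norm s1 s2
    have hsummable : Summable (fun n : ℕ => ∑ kl ∈ Finset.HasAntidiagonal.antidiagonal n,
        (c kl.1 * z^kl.1) * ((((kl.2:ℕ):ℂ) * b kl.2) * z^kl.2)) := Summable.of_norm hps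
    have hval := tsum_mul_tsum_eq_tsum_sum_antidiagonal_of_summable_norm s1 s2
    rw [(hc z hz).tsum_eq, (hBsum z hz).tsum_eq] at hval
    have hsum := hsummable.hasSum
    rw [← hval] at hsum
    have hfun : (fun n : ℕ => ∑ kl ∈ Finset.HasAntidiagonal.antidiagonal n,
        (c kl.1 * z^kl.1) * ((((kl.2:ℕ):ℂ) * b kl.2) * z^kl.2)) = fun n => D n * z^n := by
      funext n
      rw [hD, Finset.sum_mul]
      apply Finset.sum_congr rfl
      intro kl hkl
      rw [← Finset.HasAntidiagonal.mem_antidiagonal.mp hkl, pow_add]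
      ring
    rw [hfun] at hsum
    have heq : ω z * (z * deriv f0 z) = z * deriv fl z := by
      rw [hder z hz]; ring
    rwa [heq] at hsum
  have hAD : A = D := H5 hAsum hDsum
  set R := ENNReal.ofReal r with hR
  have hterm : ∀ n : ℕ, (‖a n‖₊ : ENNReal) * R^n ≤
      ∑ kl ∈ Finset.HasAntidiagonal.antidiagonal n, ((‖c kl.1‖₊ : ENNReal) * R^kl.1) *
        ((‖b kl.2‖₊ : ENNReal) * R^kl.2) := by
    intro n
    rcases Nat.eq_zero_or_pos n with h0 | hpos
    · subst h0; rw [ha0]; simp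
    · have hid : (n:ℂ) * a n = D n := congrFun hAD n
      have hnR : (0:ℝ) < n := by exact_mod_cast hpos
      have key : ‖a n‖ * r^n ≤ ∑ kl ∈ Finset.HasAntidiagonal.antidiagonal n,
          (‖c kl.1‖ * r^kl.1) * (‖b kl.2‖ * r^kl.2) := by
        have h1 : (n:ℝ) * ‖a n‖ = ‖D n‖ := by
          rw [← hid, norm_mul, Complex.norm_natCast]
        have h2 : ‖D n‖ ≤ ∑ kl ∈ Finset.HasAntidiagonal.antidiagonal n, (kl.2:ℝ) * (‖c kl.1‖ * ‖b kl.2‖) := by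
          rw [hD]
          refine le_trans (norm_sum_le _ _) (Finset.sum_le_sum ?_)
          intro kl _
          apply le_of_eq
          rw [norm_mul, norm_mul, Complex.norm_natCast]
          ring
        have h3 : ∑ kl ∈ Finset.HasAntidiagonal.antidiagonal n, (kl.2:ℝ) * (‖c kl.1‖ * ‖b kl.2‖)
            ≤ (n:ℝ) * ∑ kl ∈ Finset.HasAntidiagonal.antidiagonal n, ‖c kl.1‖ * ‖b kl.2‖ := by
          rw [Finset.mul_sum]
          apply Finset.sum_le_sum
          intro kl hkl
          have hle : (kl.2:ℝ) ≤ (n:ℝ) := by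
            have := Finset.HasAntidiagonal.mem_antidiagonal.mp hkl
            exact_mod_cast this ▸ Nat.le_add_left kl.2 kl.1
          exact mul_le_mul_of_nonneg_right hle (by positivity)
        have h4 : ‖a n‖ ≤ ∑ kl ∈ Finset.HasAntidiagonal.antidiagonal n, ‖c kl.1‖ * ‖b kl.2‖ := by
          apply le_of_mul_le_mul_left _ hnR
          rw [h1]
          exact h2.trans h3
        calc ‖a n‖ * r^n ≤ (∑ kl ∈ Finset.HasAntidiagonal.antidiagonal n, ‖c kl.1‖ * ‖b kl.2‖) * r^n :=
              mul_le_mul_of_nonneg_right h4 (by positivity)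
        _ = ∑ kl ∈ Finset.HasAntidiagonal.antidiagonal n, (‖c kl.1‖ * r^kl.1) * (‖b kl.2‖ * r^kl.2) := by
            rw [Finset.sum_mul]
            apply Finset.sum_congr rfl
            intro kl hkl
            rw [← Finset.HasAntidiagonal.mem_antidiagonal.mp hkl, pow_add]
            ring
      calc (‖a n‖₊ : ENNReal) * R^n = ENNReal.ofReal (‖a n‖ * r^n) := by
            rw [ENNReal.ofReal_mul (norm_nonneg _), ENNReal.ofReal_pow hr0,
              ofReal_norm, enorm_eq_nnnorm, hR]
      _ ≤ ENNReal.ofReal (∑ kl ∈ Finset.HasAntidiagonal.antidiagonal n,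
            (‖c kl.1‖ * r^kl.1) * (‖b kl.2‖ * r^kl.2)) := ENNReal.ofReal_le_ofReal key
      _ = ∑ kl ∈ Finset.HasAntidiagonal.antidiagonal n, ((‖c kl.1‖₊ : ENNReal) * R^kl.1) *
            ((‖b kl.2‖₊ : ENNReal) * R^kl.2) := by
            rw [ENNReal.ofReal_sum_of_nonneg (fun kl _ => by positivity)]
            apply Finset.sum_congr rfl
            intro kl _
            rw [ENNReal.ofReal_mul (by positivity),
              ENNReal.ofReal_mul (norm_nonneg _), ENNReal.ofReal_mul (norm_nonneg _),
              ENNReal.ofReal_pow hr0, ENNReal.ofReal_pow hr0,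
              ofReal_norm, enorm_eq_nnnorm, ofReal_norm, enorm_eq_nnnorm, hR]
  calc majorant a r = ∑' n : ℕ, (‖a n‖₊ : ENNReal) * R^n := rfl
  _ ≤ ∑' n : ℕ, ∑ kl ∈ Finset.HasAntidiagonal.antidiagonal n, ((‖c kl.1‖₊ : ENNReal) * R^kl.1) *
        ((‖b kl.2‖₊ : ENNReal) * R^kl.2) := ENNReal.tsum_le_tsum hterm
  _ = (∑' n : ℕ, (‖c n‖₊ : ENNReal) * R^n) * (∑' n : ℕ, (‖b n‖₊ : ENNReal) * R^n) :=
        ENN_antidiag (fun j => (‖c j‖₊ : ENNReal) * R^j) (fun m => (‖b m‖₊ : ENNReal) * R^m)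
  _ ≤ ENNReal.ofReal k * majorant b r := mul_le_mul' hbohr (le_refl _)
end
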